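/- arXiv:1710.05243 — 5 statements merged into one kernel-verified Lean document; each statement's English description precedes it below -/
import Mathlib

section
/- Suppose η : [0,π] → ℝ is infinitely differentiable, p is a positive integer, A > 0, and {ρ_{n,j}}_{(n,j)∈J} is a family of functions from [0,π] to ℝ with sup_{x∈[0,π]} |ρ_{n,j}(x)| ≤ A/(n+s)^{p+1} for all (n,j) ∈ J. Suppose further that for each (n,j) ∈ J the equation x = u_{n,j} + η(x)/(n+s) + ρ_{n,j}(x) has a unique solution φ_{n,j} in [0,π]. Then there exist infinitely differentiable functions c_0, …, c_p : [0,π] → ℝ, depending only on η and satisfying c_0(x) = x, c_1 = η, c_2 = ηη′, and a constant r_p > 0 such that |φ_{n,j} − Σ_{k=0}^{p} c_k(u_{n,j})/(n+s)^k| ≤ r_p/(n+s)^{p+1} for all (n,j) ∈ J. -/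
open Real Set Polynomial

noncomputable section

lemma abs_pow_sub_pow_le' {x y M : ℝ} (hx : |x| ≤ M) (hy : |y| ≤ M) :
    ∀ j : ℕ, |x ^ j - y ^ j| ≤ j * M ^ (j - 1) * |x - y| := by
  intro j
  have hM0 : 0 ≤ M := le_trans (abs_nonneg x) hx
  induction j with
  | zero => simp
  | succ j ih =>
    have key : x ^ (j + 1) - y ^ (j + 1) = x ^ j * (x - y) + y * (x ^ j - y ^ j) := by ring
    rw [key]
    calc |x ^ j * (x - y) + y * (x ^ j - y ^ j)|
        ≤ |x ^ j * (x - y)| + |y * (x ^ j - y ^ j)| := abs_add_le _ _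
      _ ≤ M ^ j * |x - y| + M * (j * M ^ (j - 1) * |x - y|) := by
          rw [abs_mul, abs_mul, abs_pow]
          exact add_le_add
            (mul_le_mul_of_nonneg_right (pow_le_pow_left₀ (abs_nonneg x) hx j) (abs_nonneg _))
            (mul_le_mul hy ih (abs_nonneg _) hM0)
      _ ≤ (j + 1 : ℕ) * M ^ ((j + 1) - 1) * |x - y| := by
          rcases Nat.eq_zero_or_pos j with rfl | hj
          · simp
          · have hMM : M * M ^ (j - 1) = M ^ j := by
              rw [← pow_succ']; congr 1; omega
            have : M * (j * M ^ (j - 1) * |x - y|) = j * M ^ j * |x - y| := by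
              rw [show M * (↑j * M ^ (j - 1) * |x - y|) = ↑j * (M * M ^ (j-1)) * |x - y| by ring,
                hMM]
            rw [this]
            push_cast
            nlinarith [abs_nonneg (x - y), pow_nonneg hM0 j]
def CoeffEqUpTo (m : ℕ) (P Q : Polynomial (ℝ → ℝ)) : Prop := ∀ k < m, P.coeff k = Q.coeff k

lemma CoeffEqUpTo.mul {m : ℕ} {P Q P' Q' : Polynomial (ℝ → ℝ)} (h : CoeffEqUpTo m P Q)
    (h' : CoeffEqUpTo m P' Q') : CoeffEqUpTo m (P * P') (Q * Q') := by
  intro k hk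
  rw [Polynomial.coeff_mul, Polynomial.coeff_mul]
  refine Finset.sum_congr rfl fun x hx => ?_
  rw [Finset.HasAntidiagonal.mem_antidiagonal] at hx
  rw [h x.1 (by omega), h' x.2 (by omega)]

lemma CoeffEqUpTo.pow {m : ℕ} {P Q : Polynomial (ℝ → ℝ)} (h : CoeffEqUpTo m P Q) (j : ℕ) :
    CoeffEqUpTo m (P ^ j) (Q ^ j) := by
  induction j with
  | zero => intro k hk; rfl
  | succ j ih => rw [pow_succ, pow_succ]; exact ih.mul h

def Wop (p : ℕ) (a : ℕ → ℝ → ℝ) (P : Polynomial (ℝ → ℝ)) : Polynomial (ℝ → ℝ) :=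
  X * ∑ j ∈ Finset.range (p + 1), C (a j) * P ^ j

lemma Wop_coeff_zero (p : ℕ) (a : ℕ → ℝ → ℝ) (P : Polynomial (ℝ → ℝ)) :
    (Wop p a P).coeff 0 = 0 := by
  rw [Wop, Polynomial.mul_coeff_zero, Polynomial.coeff_X_zero, zero_mul]

lemma Wop_coeff_succ (p : ℕ) (a : ℕ → ℝ → ℝ) (P : Polynomial (ℝ → ℝ)) (k : ℕ) :
    (Wop p a P).coeff (k + 1) = ∑ j ∈ Finset.range (p + 1), a j * (P ^ j).coeff k := by
  rw [Wop, Polynomial.coeff_X_mul, Polynomial.finset_sum_coeff]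
  refine Finset.sum_congr rfl fun j _ => ?_
  rw [Polynomial.coeff_C_mul]

lemma CoeffEqUpTo.wop {m : ℕ} {P Q : Polynomial (ℝ → ℝ)} {p : ℕ} {a : ℕ → ℝ → ℝ}
    (h : CoeffEqUpTo m P Q) : CoeffEqUpTo (m + 1) (Wop p a P) (Wop p a Q) := by
  intro k hk
  cases k with
  | zero => rw [Wop_coeff_zero, Wop_coeff_zero]
  | succ k =>
    rw [Wop_coeff_succ, Wop_coeff_succ]
    exact Finset.sum_congr rfl fun j _ => by rw [(h.pow j) k (by omega)]

def Spoly (p : ℕ) (a : ℕ → ℝ → ℝ) : Polynomial (ℝ → ℝ) := (Wop p a)^[p + 1] 0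

lemma iterate_coeffEq (p : ℕ) (a : ℕ → ℝ → ℝ) :
    ∀ m, CoeffEqUpTo (m + 1) ((Wop p a)^[m] 0) ((Wop p a)^[m + 1] 0) := by
  intro m
  induction m with
  | zero =>
    intro k hk
    interval_cases k
    rw [Function.iterate_zero_apply, Function.iterate_one, Wop_coeff_zero]
    rfl
  | succ m ih =>
    rw [Function.iterate_succ_apply', Function.iterate_succ_apply']
    exact ih.wop

lemma Spoly_fixed (p : ℕ) (a : ℕ → ℝ → ℝ) :
    CoeffEqUpTo (p + 2) (Spoly p a) (Wop p a (Spoly p a)) := by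
  have h := iterate_coeffEq p a (p + 1)
  have e : (Wop p a)^[p + 1 + 1] 0 = Wop p a ((Wop p a)^[p + 1] 0) :=
    Function.iterate_succ_apply' _ _ _
  rw [e] at h
  exact h

lemma Spoly_coeff_zero (p : ℕ) (a : ℕ → ℝ → ℝ) : (Spoly p a).coeff 0 = 0 := by
  rw [Spoly, Function.iterate_succ_apply', Wop_coeff_zero]

def GoodF (g : ℝ → ℝ) : Prop := ∀ m : ℕ, ContDiffOn ℝ m g (Icc 0 Real.pi)

lemma GoodF.mul {f g : ℝ → ℝ} (hf : GoodF f) (hg : GoodF g) : GoodF (f * g) :=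
  fun m => (hf m).mul (hg m)

lemma GoodF_zero : GoodF 0 := fun _ => contDiffOn_const
lemma GoodF_one : GoodF 1 := fun _ => contDiffOn_const

def PolyGood (P : Polynomial (ℝ → ℝ)) : Prop := ∀ k, GoodF (P.coeff k)

lemma PolyGood.mul {P Q : Polynomial (ℝ → ℝ)} (hP : PolyGood P) (hQ : PolyGood Q) :
    PolyGood (P * Q) := by
  intro k m
  rw [Polynomial.coeff_mul]
  have : ((∑ x ∈ Finset.HasAntidiagonal.antidiagonal k, P.coeff x.1 * Q.coeff x.2 : ℝ → ℝ)) =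
      fun u => ∑ x ∈ Finset.HasAntidiagonal.antidiagonal k, P.coeff x.1 u * Q.coeff x.2 u := by
    funext u; rw [Finset.sum_apply]; rfl
  rw [this]
  exact ContDiffOn.sum fun x _ => (hP x.1 m).mul (hQ x.2 m)

lemma PolyGood.pow {P : Polynomial (ℝ → ℝ)} (hP : PolyGood P) (j : ℕ) : PolyGood (P ^ j) := by
  induction j with
  | zero =>
    intro k m
    rcases eq_or_ne k 0 with rfl | hk
    · simp [Polynomial.coeff_one]; exact contDiffOn_const
    · simp [Polynomial.coeff_one, hk]; exact contDiffOn_const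
  | succ j ih => rw [pow_succ]; exact ih.mul hP

lemma PolyGood.wop {P : Polynomial (ℝ → ℝ)} {p : ℕ} {a : ℕ → ℝ → ℝ}
    (ha : ∀ j, GoodF (a j)) (hP : PolyGood P) : PolyGood (Wop p a P) := by
  intro k
  cases k with
  | zero => rw [Wop_coeff_zero]; exact GoodF_zero
  | succ k =>
    rw [Wop_coeff_succ]
    intro m
    have : ((∑ j ∈ Finset.range (p + 1), a j * (P ^ j).coeff k : ℝ → ℝ)) =
        fun u => ∑ j ∈ Finset.range (p + 1), a j u * (P ^ j).coeff k u := by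
      funext u; rw [Finset.sum_apply]; rfl
    rw [this]
    exact ContDiffOn.sum fun j _ => (ha j m).mul ((hP.pow j) k m)

lemma PolyGood_spoly (p : ℕ) (a : ℕ → ℝ → ℝ) (ha : ∀ j, GoodF (a j)) : PolyGood (Spoly p a) := by
  have : ∀ m, PolyGood ((Wop p a)^[m] 0) := by
    intro m
    induction m with
    | zero => intro k; simpa using GoodF_zero
    | succ m ih => rw [Function.iterate_succ_apply']; exact PolyGood.wop ha ih
  exact this (p + 1)

def evalAt (u ε : ℝ) : Polynomial (ℝ → ℝ) →+* ℝ :=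
  (Polynomial.evalRingHom ε).comp (Polynomial.mapRingHom (Pi.evalRingHom (fun _ : ℝ => ℝ) u))

lemma evalAt_X (u ε : ℝ) : evalAt u ε X = ε := by simp [evalAt]

lemma evalAt_C (u ε : ℝ) (g : ℝ → ℝ) : evalAt u ε (C g) = g u := by simp [evalAt]

lemma evalAt_eq_sum (u ε : ℝ) (P : Polynomial (ℝ → ℝ)) {m : ℕ} (hm : P.natDegree < m) :
    evalAt u ε P = ∑ k ∈ Finset.range m, P.coeff k u * ε ^ k := by
  have h1 : (P.map (Pi.evalRingHom (fun _ : ℝ => ℝ) u)).natDegree < m :=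
    lt_of_le_of_lt Polynomial.natDegree_map_le hm
  have := Polynomial.eval_eq_sum_range' h1 ε
  simp only [evalAt, RingHom.comp_apply, Polynomial.coe_mapRingHom, Polynomial.coe_evalRingHom]
  rw [this]
  refine Finset.sum_congr rfl fun k _ => ?_
  rw [Polynomial.coeff_map]
  rfl


lemma coeff_pow_zero' (P : Polynomial (ℝ → ℝ)) (h : P.coeff 0 = 0) (j : ℕ) :
    (P ^ j).coeff 0 = if j = 0 then 1 else 0 := by
  induction j with
  | zero => simp
  | succ j ih => rw [pow_succ, Polynomial.mul_coeff_zero, h, mul_zero]; simp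

lemma coeff_pow_one' (P : Polynomial (ℝ → ℝ)) (h : P.coeff 0 = 0) (j : ℕ) :
    (P ^ j).coeff 1 = if j = 1 then P.coeff 1 else 0 := by
  induction j with
  | zero => simp [Polynomial.coeff_one]
  | succ j ih =>
    rw [pow_succ, Polynomial.coeff_mul]
    rw [show (1:ℕ) = 0 + 1 from rfl, Finset.Nat.sum_antidiagonal_eq_sum_range_succ_mk]
    simp only [Finset.sum_range_succ, Finset.sum_range_one]
    rw [coeff_pow_zero' P h, ih, h]
    rcases Nat.eq_zero_or_pos j with rfl | hj
    · simp
    · have hj1 : j ≠ 0 := hj.ne'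
      rcases eq_or_ne j 1 with rfl | hj2
      · simp
      · simp [hj1, hj2, mul_zero, zero_mul]

lemma Spoly_coeff_one (p : ℕ) (a : ℕ → ℝ → ℝ) : (Spoly p a).coeff 1 = a 0 := by
  have h := Spoly_fixed p a 1 (by omega)
  rw [h, show (1:ℕ) = 0 + 1 from rfl, Wop_coeff_succ]
  rw [Finset.sum_congr rfl (fun j _ => by rw [coeff_pow_zero' _ (Spoly_coeff_zero p a) j])]
  simp

lemma Spoly_coeff_two (p : ℕ) (a : ℕ → ℝ → ℝ) (hp : 1 ≤ p) :
    (Spoly p a).coeff 2 = a 1 * a 0 := by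
  have h := Spoly_fixed p a 2 (by omega)
  rw [h, show (2:ℕ) = 1 + 1 from rfl, Wop_coeff_succ]
  rw [Finset.sum_congr rfl (fun j _ => by rw [coeff_pow_one' _ (Spoly_coeff_zero p a) j])]
  rw [Spoly_coeff_one]
  simp only [mul_ite, mul_zero]
  rw [Finset.sum_ite_eq' (Finset.range (p + 1)) 1 (fun j => a j * a 0)]
  rw [if_pos (by simp [Finset.mem_range]; omega)]

def TruncP (p : ℕ) (P : Polynomial (ℝ → ℝ)) : Polynomial (ℝ → ℝ) :=
  ∑ k ∈ Finset.range (p + 1), C (P.coeff k) * X ^ k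

lemma TruncP_coeff (p : ℕ) (P : Polynomial (ℝ → ℝ)) (l : ℕ) :
    (TruncP p P).coeff l = if l ≤ p then P.coeff l else 0 := by
  rw [TruncP, Polynomial.finset_sum_coeff]
  simp only [Polynomial.coeff_C_mul, Polynomial.coeff_X_pow, mul_ite, mul_one, mul_zero]
  rw [Finset.sum_ite_eq (Finset.range (p + 1)) l (fun k => P.coeff k)]
  simp [Finset.mem_range, Nat.lt_succ_iff]

lemma tail_bound (R' : Polynomial (ℝ → ℝ)) (p : ℕ) (hz : ∀ k ≤ p, R'.coeff k = 0)
    (B : ℕ → ℝ) (hB : ∀ k, ∀ u ∈ Icc 0 Real.pi, |R'.coeff k u| ≤ B k) (hB0 : ∀ k, 0 ≤ B k)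
    {u ε : ℝ} (hu : u ∈ Icc 0 Real.pi) (hε0 : 0 < ε) (hε1 : ε ≤ 1) :
    |evalAt u ε R'| ≤ (∑ k ∈ Finset.range (R'.natDegree + 1), B k) * ε ^ (p + 1) := by
  rw [evalAt_eq_sum u ε R' (Nat.lt_succ_self _)]
  calc |∑ k ∈ Finset.range (R'.natDegree + 1), R'.coeff k u * ε ^ k|
      ≤ ∑ k ∈ Finset.range (R'.natDegree + 1), |R'.coeff k u * ε ^ k| :=
        Finset.abs_sum_le_sum_abs _ _
    _ ≤ ∑ k ∈ Finset.range (R'.natDegree + 1), B k * ε ^ (p + 1) := by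
        refine Finset.sum_le_sum fun k _ => ?_
        rcases le_or_gt k p with hk | hk
        · rw [hz k hk]; simp; exact mul_nonneg (hB0 k) (by positivity)
        · rw [abs_mul, abs_pow, abs_of_pos hε0]
          refine mul_le_mul (hB k u hu) (pow_le_pow_of_le_one hε0.le hε1 hk) (by positivity)
            (hB0 k)
    _ = (∑ k ∈ Finset.range (R'.natDegree + 1), B k) * ε ^ (p + 1) := by
        rw [Finset.sum_mul]

lemma taylor_two_sided {f : ℝ → ℝ} {n : ℕ} {a b : ℝ} (hab : a < b)
    (hf : ContDiffOn ℝ (n+1) f (Icc a b)) {K : ℝ}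
    (hK : ∀ y ∈ Icc a b, |iteratedDerivWithin (n+1) f (Icc a b) y| ≤ K)
    {u x : ℝ} (hu : u ∈ Icc a b) (hx : x ∈ Icc a b) :
    |f x - taylorWithinEval f n (Icc a b) u x| ≤ K / (n.factorial : ℝ) * |x - u| ^ (n+1) := by
  have hK0 : 0 ≤ K := le_trans (abs_nonneg _) (hK u hu)
  have hfn : ContDiffOn ℝ n f (Icc a b) := by
    apply hf.of_le; exact_mod_cast Nat.cast_le.2 (Nat.le_succ n)
  have hdiff : DifferentiableOn ℝ (iteratedDerivWithin n f (Icc a b)) (Icc a b) := by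
    apply hf.differentiableOn_iteratedDerivWithin _ (uniqueDiffOn_Icc hab)
    exact_mod_cast Nat.lt_succ_self n
  set g : ℝ → ℝ := fun t => taylorWithinEval f n (Icc a b) t x with hg
  have hderiv : ∀ t ∈ Icc a b, HasDerivWithinAt g
      (((n.factorial : ℝ)⁻¹ * (x - t) ^ n) • iteratedDerivWithin (n + 1) f (Icc a b) t) (Icc a b) t :=
    fun t ht => hasDerivWithinAt_taylorWithinEval_at_Icc x hab ht hfn hdiff
  set S : Set ℝ := Icc (min u x) (max u x) with hS
  have hSsub : S ⊆ Icc a b := Icc_subset_Icc (le_min hu.1 hx.1) (max_le hu.2 hx.2)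
  have huS : u ∈ S := ⟨min_le_left _ _, le_max_left _ _⟩
  have hxS : x ∈ S := ⟨min_le_right _ _, le_max_right _ _⟩
  have habs : ∀ t ∈ S, |x - t| ≤ |x - u| := by
    intro t ht
    rcases le_total u x with h | h
    · simp only [hS, min_eq_left h, max_eq_right h] at ht
      rw [abs_of_nonneg (by linarith [ht.2]), abs_of_nonneg (by linarith)]
      linarith [ht.1]
    · simp only [hS, min_eq_right h, max_eq_left h] at ht
      rw [abs_of_nonpos (by linarith [ht.1]), abs_of_nonpos (by linarith)]
      linarith [ht.2]
  have key := (convex_Icc (min u x) (max u x)).norm_image_sub_le_of_norm_hasDerivWithin_le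
    (f := g) (C := K / (n.factorial : ℝ) * |x - u| ^ n)
    (fun t ht => ((hderiv t (hSsub ht)).mono hSsub))
    (fun t ht => by
      have h2 : |iteratedDerivWithin (n + 1) f (Icc a b) t| ≤ K := hK t (hSsub ht)
      rw [Real.norm_eq_abs, smul_eq_mul, abs_mul, abs_mul, abs_inv,
        abs_of_nonneg (by positivity : (0:ℝ) ≤ (n.factorial : ℝ)), abs_pow]
      have h3 : |x - t| ^ n ≤ |x - u| ^ n := pow_le_pow_left₀ (abs_nonneg _) (habs t ht) n
      have h4 := mul_le_mul h3 h2 (abs_nonneg _) (by positivity)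
      have h5 : (0:ℝ) ≤ ((n.factorial : ℝ))⁻¹ := by positivity
      have h6 := mul_le_mul_of_nonneg_right h4 h5
      have h7 : ((n.factorial:ℝ))⁻¹ * |x - t| ^ n * |iteratedDerivWithin (n + 1) f (Icc a b) t|
          = |x - t| ^ n * |iteratedDerivWithin (n + 1) f (Icc a b) t| * ((n.factorial:ℝ))⁻¹ := by
        ring
      rw [h7]
      exact h6.trans_eq (by ring)
      ) huS hxS
  have hgx : g x = f x := taylorWithinEval_self f n (Icc a b) x
  rw [Real.norm_eq_abs, Real.norm_eq_abs, hgx] at key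
  calc |f x - g u| ≤ K / (n.factorial : ℝ) * |x - u| ^ n * |x - u| := key
    _ = K / (n.factorial : ℝ) * |x - u| ^ (n+1) := by ring

set_option maxHeartbeats 1000000 in
theorem stmt4 (s : ℝ) (hs : 0 < s) (J : Set (ℕ × ℕ))
    (hJ : ∀ nj ∈ J, 1 ≤ nj.2 ∧ nj.2 ≤ nj.1)
    (eta : ℝ → ℝ) (heta : ∀ m : ℕ, ContDiffOn ℝ m eta (Set.Icc 0 Real.pi))
    (p : ℕ) (hp : 1 ≤ p) (A : ℝ) (hA : 0 < A)
    (rho : ℕ → ℕ → ℝ → ℝ)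
    (hrho : ∀ nj ∈ J, ∀ x ∈ Set.Icc (0 : ℝ) Real.pi,
      |rho nj.1 nj.2 x| ≤ A / ((nj.1 : ℝ) + s) ^ (p + 1))
    (phi : ℕ → ℕ → ℝ)
    (hphi : ∀ nj ∈ J,
      phi nj.1 nj.2 ∈ Set.Icc (0 : ℝ) Real.pi ∧
      phi nj.1 nj.2 = (nj.2 : ℝ) * Real.pi / ((nj.1 : ℝ) + s)
        + eta (phi nj.1 nj.2) / ((nj.1 : ℝ) + s) + rho nj.1 nj.2 (phi nj.1 nj.2) ∧
      ∀ x ∈ Set.Icc (0 : ℝ) Real.pi,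
        x = (nj.2 : ℝ) * Real.pi / ((nj.1 : ℝ) + s)
          + eta x / ((nj.1 : ℝ) + s) + rho nj.1 nj.2 x → x = phi nj.1 nj.2) :
    ∃ (c : ℕ → ℝ → ℝ) (r : ℝ),
      (∀ k ≤ p, ∀ m : ℕ, ContDiffOn ℝ m (c k) (Set.Icc 0 Real.pi)) ∧
      (∀ x ∈ Set.Icc (0 : ℝ) Real.pi, c 0 x = x) ∧
      (∀ x ∈ Set.Icc (0 : ℝ) Real.pi, c 1 x = eta x) ∧
      (∀ x ∈ Set.Icc (0 : ℝ) Real.pi,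
        c 2 x = eta x * derivWithin eta (Set.Icc 0 Real.pi) x) ∧
      0 < r ∧
      ∀ nj ∈ J,
        |phi nj.1 nj.2 - ∑ k ∈ Finset.range (p + 1),
            c k ((nj.2 : ℝ) * Real.pi / ((nj.1 : ℝ) + s)) / ((nj.1 : ℝ) + s) ^ k|
          ≤ r / ((nj.1 : ℝ) + s) ^ (p + 1) := by
  have hpi : (0:ℝ) < Real.pi := Real.pi_pos
  set I : Set ℝ := Set.Icc (0:ℝ) Real.pi with hI
  have uD : UniqueDiffOn ℝ I := uniqueDiffOn_Icc hpi
  have iterGood : ∀ j : ℕ, GoodF (iteratedDerivWithin j eta I) := by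
    intro j
    induction j with
    | zero => intro m; rw [iteratedDerivWithin_zero]; exact heta m
    | succ j ih =>
      intro m
      refine (ContDiffOn.derivWithin (ih (m + 1)) uD ?_).congr
        fun x hx => congrFun iteratedDerivWithin_succ x
      norm_cast
  set a : ℕ → ℝ → ℝ := fun j u => iteratedDerivWithin j eta I u / (j.factorial : ℝ) with ha
  have haGood : ∀ j, GoodF (a j) := fun j m => ((iterGood j m).div_const _)
  have hbound : ∀ g : ℝ → ℝ, GoodF g → ∃ C : ℝ, 0 ≤ C ∧ ∀ u ∈ I, |g u| ≤ C := by
    intro g hg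
    obtain ⟨C, hC⟩ := isCompact_Icc.exists_bound_of_continuousOn (contDiffOn_zero.1 (hg 0))
    exact ⟨max C 0, le_max_right _ _, fun u hu => le_trans (hC u hu) (le_max_left _ _)⟩
  choose Ka hKa0 hKa using fun j => hbound (a j) (haGood j)
  have hSgood : PolyGood (Spoly p a) := PolyGood_spoly p a haGood
  set S : Polynomial (ℝ → ℝ) := Spoly p a with hSdef
  choose Kb hKb0 hKb using fun k => hbound (S.coeff k) (hSgood k)
  obtain ⟨Keta, hKeta0, hKeta⟩ := hbound eta heta
  obtain ⟨KT, hKT0, hKT⟩ := hbound (iteratedDerivWithin (p + 1) eta I) (iterGood (p + 1))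
  set T : Polynomial (ℝ → ℝ) := TruncP p S with hTdef
  have hTgood : PolyGood T := by
    intro k
    rw [hTdef, TruncP_coeff]
    split
    · exact hSgood k
    · exact GoodF_zero
  set Q : Polynomial (ℝ → ℝ) := Wop p a T with hQdef
  have hQgood : PolyGood Q := PolyGood.wop haGood hTgood
  set R' : Polynomial (ℝ → ℝ) := Q - T with hRdef
  have hRgood : PolyGood R' := by
    intro k m
    rw [hRdef, Polynomial.coeff_sub]
    exact (hQgood k m).sub (hTgood k m)
  choose BR hBR0 hBR using fun k => hbound (R'.coeff k) (hRgood k)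
  have hT_S : CoeffEqUpTo (p + 1) T S := by
    intro k hk
    rw [hTdef, TruncP_coeff, if_pos (by omega : k ≤ p)]
  have hWS := Spoly_fixed p a
  have hQ_T : CoeffEqUpTo (p + 1) Q T := by
    intro k hk
    have h1 : CoeffEqUpTo (p + 2) Q (Wop p a S) := hT_S.wop
    rw [h1 k (by omega), ← hWS k (by omega), ← hT_S k hk]
  have hRz : ∀ k ≤ p, R'.coeff k = 0 := by
    intro k hk
    rw [hRdef, Polynomial.coeff_sub, hQ_T k (by omega), sub_self]
  set c : ℕ → ℝ → ℝ := fun k =>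
    if k = 0 then (fun x => x) else if k ≤ p then S.coeff k
    else if k = 2 then (fun u => eta u * derivWithin eta I u) else 0 with hc
  set Mδ : ℝ := Keta + A with hMδ
  set Msig : ℝ := ∑ k ∈ Finset.range (p + 1), Kb k with hMsig
  set M : ℝ := 1 + Mδ + Msig with hM
  set L : ℝ := (∑ j ∈ Finset.range (p + 1), Ka j) * ((p + 1) * M ^ p) with hLdef
  set B : ℝ := ∑ k ∈ Finset.range (R'.natDegree + 1), BR k with hBdef
  set B' : ℝ := KT / (p.factorial : ℝ) * Mδ ^ (p + 1) + A + B with hB'def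
  obtain ⟨N₀, hN₀⟩ := exists_nat_ge (2 * L)
  set r : ℝ := max (2 * B') ((Real.pi + Msig) * ((N₀ : ℝ) + s + 1) ^ (p + 1)) + 1 with hrdef
  have hMδ0 : 0 ≤ Mδ := add_nonneg hKeta0 hA.le
  have hMsig0 : 0 ≤ Msig := Finset.sum_nonneg fun k _ => hKb0 k
  have hM1 : 1 ≤ M := by rw [hM]; linarith
  have hM0 : 0 ≤ M := by linarith
  have hKasum0 : 0 ≤ ∑ j ∈ Finset.range (p + 1), Ka j := Finset.sum_nonneg fun j _ => hKa0 j
  have hL0 : 0 ≤ L := by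
    rw [hLdef]; positivity
  have hB0 : 0 ≤ B := Finset.sum_nonneg fun k _ => hBR0 k
  have hB'0 : 0 < B' := by
    rw [hB'def]
    have : 0 ≤ KT / (p.factorial : ℝ) * Mδ ^ (p + 1) := by positivity
    linarith
  have hr0 : 0 < r := by
    rw [hrdef]
    have : 0 ≤ max (2 * B') ((Real.pi + Msig) * ((N₀ : ℝ) + s + 1) ^ (p + 1)) :=
      le_trans (by linarith) (le_max_left _ _)
    linarith
  refine ⟨c, r, ?_, ?_, ?_, ?_, hr0, ?_⟩
  · intro k hk m
    rw [hc]
    rcases eq_or_ne k 0 with rfl | hk0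
    · simp; exact contDiffOn_id
    · simp only [hk0, if_neg, if_pos hk]
      exact hSgood k m
  · intro x hx
    simp [hc]
  · intro x hx
    have h1 : c 1 = S.coeff 1 := by
      rw [hc]; simp [hp, Nat.one_ne_zero]
    rw [h1, hSdef, Spoly_coeff_one]
    simp [ha, iteratedDerivWithin_zero]
  · intro x hx
    rcases lt_or_ge p 2 with hp2 | hp2
    · have h2 : c 2 = fun u => eta u * derivWithin eta I u := by
        rw [hc]; simp [show ¬ (2 ≤ p) by omega]
      rw [h2]
    · have h2 : c 2 = S.coeff 2 := by
        rw [hc]; simp [hp2]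
      rw [h2, hSdef, Spoly_coeff_two p a hp]
      show a 1 x * a 0 x = eta x * derivWithin eta I x
      rw [ha]
      simp only []
      rw [iteratedDerivWithin_one, iteratedDerivWithin_zero]
      simp [Nat.factorial]
      ring
  · intro nj hnj
    obtain ⟨hj1, hjn⟩ := hJ nj hnj
    obtain ⟨hφI, heq, -⟩ := hphi nj hnj
    set N : ℝ := (nj.1 : ℝ) + s with hN
    have hn1 : 1 ≤ nj.1 := le_trans hj1 hjn
    have hn1' : (1:ℝ) ≤ (nj.1 : ℝ) := by exact_mod_cast hn1
    have hN1 : 1 < N := by rw [hN]; linarith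
    have hN0 : 0 < N := by linarith
    set ε : ℝ := N⁻¹ with hε
    have hε0 : 0 < ε := inv_pos.2 hN0
    have hemul : ε * N = 1 := by rw [hε]; exact inv_mul_cancel₀ hN0.ne'
    have hε1 : ε ≤ 1 := by
      have h7 : ε * 1 ≤ ε * N := mul_le_mul_of_nonneg_left hN1.le hε0.le
      rw [mul_one, hemul] at h7
      exact h7
    set u : ℝ := (nj.2 : ℝ) * Real.pi / N with hu'
    have huI : u ∈ I := by
      rw [hI]
      refine Set.mem_Icc.2 ⟨by rw [hu']; positivity, ?_⟩
      rw [hu', div_le_iff₀ hN0]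
      have hjN : (nj.2 : ℝ) ≤ N := by
        rw [hN]
        have : (nj.2 : ℝ) ≤ (nj.1 : ℝ) := by exact_mod_cast hjn
        linarith
      have := mul_le_mul_of_nonneg_right hjN hpi.le
      linarith
    set φ : ℝ := phi nj.1 nj.2 with hφdef
    set δ : ℝ := φ - u with hδdef
    set σ : ℝ := ∑ k ∈ Finset.range (p + 1), S.coeff k u * ε ^ k with hσdef
    have hρ : |rho nj.1 nj.2 φ| ≤ A * ε ^ (p + 1) := by
      have h := hrho nj hnj φ hφI
      rwa [div_eq_mul_inv, ← inv_pow, ← hε] at h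
    have heq' : δ = eta φ * ε + rho nj.1 nj.2 φ := by
      rw [hδdef, hε]
      linear_combination heq
    have hεp : ε ^ (p + 1) ≤ ε := by
      calc ε ^ (p + 1) ≤ ε ^ 1 := pow_le_pow_of_le_one hε0.le hε1 (by omega)
        _ = ε := pow_one ε
    have hδb : |δ| ≤ Mδ * ε := by
      rw [heq']
      calc |eta φ * ε + rho nj.1 nj.2 φ| ≤ |eta φ * ε| + |rho nj.1 nj.2 φ| := abs_add_le _ _
        _ ≤ Keta * ε + A * ε ^ (p + 1) := by
            rw [abs_mul, abs_of_pos hε0]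
            exact add_le_add (mul_le_mul_of_nonneg_right (hKeta φ hφI) hε0.le) hρ
        _ ≤ Keta * ε + A * ε := add_le_add le_rfl (mul_le_mul_of_nonneg_left hεp hA.le)
        _ = Mδ * ε := by rw [hMδ]; ring
    -- Taylor expansion
    have hf' : ContDiffOn ℝ ((p : WithTop ℕ∞) + 1) eta I := by exact_mod_cast heta (p + 1)
    have htay := taylor_two_sided hpi hf' hKT huI hφI
    have htp : taylorWithinEval eta p I u φ = ∑ k ∈ Finset.range (p + 1), a k u * δ ^ k := by
      rw [taylor_within_apply]
      refine Finset.sum_congr rfl fun k _ => ?_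
      rw [smul_eq_mul, ha]
      simp only []
      rw [← hδdef]
      ring
    rw [htp] at htay
    set R1 : ℝ := eta φ - ∑ k ∈ Finset.range (p + 1), a k u * δ ^ k with hR1def
    have hR1 : |R1| ≤ KT / (p.factorial : ℝ) * |δ| ^ (p + 1) := by
      rw [hR1def]
      have : |φ - u| = |δ| := by rw [hδdef]
      rw [← this]
      exact htay
    -- polynomial evaluation identities
    have hTeval : evalAt u ε T = σ := by
      rw [hTdef, TruncP, map_sum, hσdef]
      refine Finset.sum_congr rfl fun k _ => ?_
      rw [map_mul, map_pow, evalAt_C, evalAt_X]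
    have hQeval : evalAt u ε Q = ε * ∑ k ∈ Finset.range (p + 1), a k u * σ ^ k := by
      rw [hQdef, Wop, map_mul, evalAt_X, map_sum]
      congr 1
      refine Finset.sum_congr rfl fun k _ => ?_
      rw [map_mul, evalAt_C, map_pow, hTeval]
    have hRb : |evalAt u ε Q - σ| ≤ B * ε ^ (p + 1) := by
      have h := tail_bound R' p hRz BR hBR hBR0 huI hε0 hε1
      have h2 : evalAt u ε R' = evalAt u ε Q - σ := by
        rw [hRdef, map_sub, hTeval]
      rwa [h2, ← hBdef] at h
    -- the key identity
    have e1 : eta φ = (∑ k ∈ Finset.range (p + 1), a k u * δ ^ k) + R1 := by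
      rw [hR1def]; ring
    have hsplit : (∑ k ∈ Finset.range (p + 1), a k u * (δ ^ k - σ ^ k))
        = (∑ k ∈ Finset.range (p + 1), a k u * δ ^ k)
          - ∑ k ∈ Finset.range (p + 1), a k u * σ ^ k := by
      rw [← Finset.sum_sub_distrib]
      exact Finset.sum_congr rfl fun k _ => mul_sub _ _ _
    have hkey : δ - σ = ε * (∑ k ∈ Finset.range (p + 1), a k u * (δ ^ k - σ ^ k))
        + (ε * R1 + rho nj.1 nj.2 φ + (evalAt u ε Q - σ)) := by
      rw [hsplit]
      linear_combination heq' + ε * e1 - hQeval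
    have hE : |ε * R1 + rho nj.1 nj.2 φ + (evalAt u ε Q - σ)| ≤ B' * ε ^ (p + 1) := by
      have h1 : |δ| ^ (p + 1) ≤ Mδ ^ (p + 1) * ε ^ (p + 1) := by
        rw [← mul_pow]
        exact pow_le_pow_left₀ (abs_nonneg _) hδb _
      have h2 : |R1| ≤ KT / (p.factorial : ℝ) * (Mδ ^ (p + 1) * ε ^ (p + 1)) :=
        hR1.trans (mul_le_mul_of_nonneg_left h1 (by positivity))
      have h3 : |ε * R1| ≤ KT / (p.factorial : ℝ) * Mδ ^ (p + 1) * ε ^ (p + 1) := by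
        rw [abs_mul, abs_of_pos hε0]
        calc ε * |R1| ≤ 1 * |R1| := mul_le_mul_of_nonneg_right hε1 (abs_nonneg _)
          _ = |R1| := one_mul _
          _ ≤ KT / (p.factorial : ℝ) * (Mδ ^ (p + 1) * ε ^ (p + 1)) := h2
          _ = KT / (p.factorial : ℝ) * Mδ ^ (p + 1) * ε ^ (p + 1) := by ring
      calc |ε * R1 + rho nj.1 nj.2 φ + (evalAt u ε Q - σ)|
          ≤ |ε * R1 + rho nj.1 nj.2 φ| + |evalAt u ε Q - σ| := abs_add_le _ _
        _ ≤ |ε * R1| + |rho nj.1 nj.2 φ| + |evalAt u ε Q - σ| := by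
            have := abs_add_le (ε * R1) (rho nj.1 nj.2 φ)
            linarith
        _ ≤ KT / (p.factorial : ℝ) * Mδ ^ (p + 1) * ε ^ (p + 1) + A * ε ^ (p + 1)
            + B * ε ^ (p + 1) := by linarith [h3, hρ, hRb]
        _ = B' * ε ^ (p + 1) := by rw [hB'def]; ring
    -- Lipschitz bound
    have hδM : |δ| ≤ M := by
      calc |δ| ≤ Mδ * ε := hδb
        _ ≤ Mδ * 1 := mul_le_mul_of_nonneg_left hε1 hMδ0
        _ = Mδ := mul_one _
        _ ≤ M := by rw [hM]; linarith
    have hσMsig : |σ| ≤ Msig := by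
      calc |σ| ≤ ∑ k ∈ Finset.range (p + 1), |S.coeff k u * ε ^ k| := by
            rw [hσdef]; exact Finset.abs_sum_le_sum_abs _ _
        _ ≤ ∑ k ∈ Finset.range (p + 1), Kb k := by
            refine Finset.sum_le_sum fun k _ => ?_
            rw [abs_mul, abs_pow, abs_of_pos hε0]
            calc |S.coeff k u| * ε ^ k ≤ Kb k * 1 :=
                  mul_le_mul (hKb k u huI) (pow_le_one₀ hε0.le hε1) (by positivity) (hKb0 k)
              _ = Kb k := mul_one _
        _ = Msig := hMsig.symm
    have hσM : |σ| ≤ M := by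
      refine hσMsig.trans ?_
      rw [hM]; linarith
    have hLip : |∑ k ∈ Finset.range (p + 1), a k u * (δ ^ k - σ ^ k)| ≤ L * |δ - σ| := by
      calc |∑ k ∈ Finset.range (p + 1), a k u * (δ ^ k - σ ^ k)|
          ≤ ∑ k ∈ Finset.range (p + 1), |a k u * (δ ^ k - σ ^ k)| :=
            Finset.abs_sum_le_sum_abs _ _
        _ ≤ ∑ k ∈ Finset.range (p + 1), Ka k * ((p + 1) * M ^ p * |δ - σ|) := by
            refine Finset.sum_le_sum fun k hk => ?_
            rw [abs_mul]
            refine mul_le_mul (hKa k u huI) ?_ (abs_nonneg _) (hKa0 k)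
            calc |δ ^ k - σ ^ k| ≤ k * M ^ (k - 1) * |δ - σ| :=
                  abs_pow_sub_pow_le' hδM hσM k
              _ ≤ (p + 1) * M ^ p * |δ - σ| := by
                  refine mul_le_mul_of_nonneg_right ?_ (abs_nonneg _)
                  have hkp : k ≤ p + 1 := by
                    rw [Finset.mem_range] at hk; omega
                  have h1 : (k : ℝ) ≤ (p + 1 : ℝ) := by exact_mod_cast hkp
                  have h2 : M ^ (k - 1) ≤ M ^ p :=
                    pow_le_pow_right₀ hM1 (by omega)
                  have hMk : 0 ≤ M ^ (k - 1) := by positivity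
                  exact mul_le_mul h1 h2 hMk (by positivity)
        _ = L * |δ - σ| := by
            rw [hLdef, ← Finset.sum_mul]
            ring
    -- assemble
    have hmain : |δ - σ| ≤ ε * L * |δ - σ| + B' * ε ^ (p + 1) := by
      calc |δ - σ| = |ε * (∑ k ∈ Finset.range (p + 1), a k u * (δ ^ k - σ ^ k))
          + (ε * R1 + rho nj.1 nj.2 φ + (evalAt u ε Q - σ))| := by rw [← hkey]
        _ ≤ |ε * (∑ k ∈ Finset.range (p + 1), a k u * (δ ^ k - σ ^ k))|
            + |ε * R1 + rho nj.1 nj.2 φ + (evalAt u ε Q - σ)| := abs_add_le _ _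
        _ ≤ ε * (L * |δ - σ|) + B' * ε ^ (p + 1) := by
            rw [abs_mul, abs_of_pos hε0]
            exact add_le_add (mul_le_mul_of_nonneg_left hLip hε0.le) hE
        _ = ε * L * |δ - σ| + B' * ε ^ (p + 1) := by ring
    -- rewrite the target
    have htarget : ∑ k ∈ Finset.range (p + 1), c k u / N ^ k = u + σ := by
      have hterm : ∀ k ∈ Finset.range (p + 1),
          c k u / N ^ k = (if k = 0 then u else 0) + S.coeff k u * ε ^ k := by
        intro k hk
        rw [Finset.mem_range] at hk
        rcases eq_or_ne k 0 with rfl | hk0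
        · have hc0 : c 0 u = u := by simp [hc]
          have hS0 : S.coeff 0 u = 0 := by
            rw [hSdef]
            rw [Spoly_coeff_zero]
            rfl
          rw [hc0, hS0]
          simp
        · have hck : c k u = S.coeff k u := by
            rw [hc]; simp [hk0, show k ≤ p by omega]
          rw [hck, if_neg hk0, zero_add, div_eq_mul_inv, ← inv_pow, ← hε]
      rw [Finset.sum_congr rfl hterm, Finset.sum_add_distrib, ← hσdef]
      congr 1
      rw [Finset.sum_ite_eq' (Finset.range (p + 1)) 0 (fun _ => u)]
      rw [if_pos (Finset.mem_range.2 (by omega))]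
    have hgoal_lhs : |φ - ∑ k ∈ Finset.range (p + 1), c k u / N ^ k| = |δ - σ| := by
      rw [htarget]
      congr 1
      rw [hδdef]; ring
    have hgoal_rhs : r / N ^ (p + 1) = r * ε ^ (p + 1) := by
      rw [div_eq_mul_inv, ← inv_pow, ← hε]
    rw [hgoal_lhs, hgoal_rhs]
    -- case split
    rcases le_or_gt (2 * L) N with hbig | hsmall
    · have hεL : ε * L ≤ 1 / 2 := by
        rw [hε]
        rw [inv_mul_le_iff₀ hN0]  -- maybe wrong name
        linarith
      have habs0 : 0 ≤ |δ - σ| := abs_nonneg _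
      have h2 : |δ - σ| ≤ 2 * B' * ε ^ (p + 1) := by
        have h8 := mul_le_mul_of_nonneg_right hεL habs0
        linarith [hmain, h8]
      calc |δ - σ| ≤ 2 * B' * ε ^ (p + 1) := h2
        _ ≤ r * ε ^ (p + 1) := by
            refine mul_le_mul_of_nonneg_right ?_ (by positivity)
            rw [hrdef]
            have := le_max_left (2 * B') ((Real.pi + Msig) * ((N₀ : ℝ) + s + 1) ^ (p + 1))
            linarith
    · -- small N
      have hNsmall : N ≤ (N₀ : ℝ) + s + 1 := by
        have h2 : 2 * L ≤ (N₀ : ℝ) := hN₀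
        linarith
      have hdpi : |δ| ≤ Real.pi := by
        obtain ⟨hφ0, hφπ⟩ := hφI
        obtain ⟨hu0, huπ⟩ := huI
        rw [hδdef, abs_le]
        constructor <;> linarith
      have hds : |δ - σ| ≤ Real.pi + Msig := by
        calc |δ - σ| ≤ |δ| + |σ| := by
              rw [sub_eq_add_neg]
              refine (abs_add_le _ _).trans ?_
              rw [abs_neg]
          _ ≤ Real.pi + Msig := add_le_add hdpi hσMsig
      refine hds.trans ?_
      rw [hε, inv_pow, ← div_eq_mul_inv, le_div_iff₀ (by positivity)]
      have hNp : N ^ (p + 1) ≤ ((N₀ : ℝ) + s + 1) ^ (p + 1) :=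
        pow_le_pow_left₀ hN0.le hNsmall _
      have hpm : (0:ℝ) ≤ Real.pi + Msig := by linarith
      have h5 : (Real.pi + Msig) * N ^ (p + 1)
          ≤ (Real.pi + Msig) * ((N₀ : ℝ) + s + 1) ^ (p + 1) :=
        mul_le_mul_of_nonneg_left hNp hpm
      rw [hrdef]
      have h6 := le_max_right (2 * B') ((Real.pi + Msig) * ((N₀ : ℝ) + s + 1) ^ (p + 1))
      linarith

end
end

section
/- Suppose η : [0,π] → ℝ is infinitely differentiable, p is a positive integer, A > 0, and {ρ_{n,j}}_{(n,j)∈J} is a family of functions from [0,π] to ℝ with sup_{x∈[0,π]} |ρ_{n,j}(x)| ≤ A/(n+s)^{p+1} for all (n,j) ∈ J. Suppose further that for each (n,j) ∈ J the equation x = u_{n,j} + η(x)/(n+s) + ρ_{n,j}(x) has a unique solution φ_{n,j} in [0,π]. Let g : ℝ → ℝ be an infinitely differentiable, 2π-periodic, even function that is strictly increasing on [0,π], and set λ_{n,j} = g(φ_{n,j}). Then there exist infinitely differentiable functions d_0, …, d_p : [0,π] → ℝ, with d_0 equal to the restriction of g to [0,π] and d_1 = g′·η, and a constant R_p > 0 such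 that |λ_{n,j} − Σ_{k=0}^{p} d_k(u_{n,j})/(n+s)^k| ≤ R_p/(n+s)^{p+1} for all (n,j) ∈ J. -/
open Real Set Polynomial

namespace Stmt5Aux

/-- Smoothness of iterated derivatives within a set with unique derivatives. -/
lemma smooth_itdw {f : ℝ → ℝ} {S : Set ℝ} (hS : UniqueDiffOn ℝ S)
    (hf : ∀ m : ℕ, ContDiffOn ℝ m f S) (k : ℕ) (m : ℕ) :
    ContDiffOn ℝ m (iteratedDerivWithin k f S) S := by
  induction k generalizing m with
  | zero => simpa using hf m
  | succ k ih =>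
      have h1 : ContDiffOn ℝ m (derivWithin (iteratedDerivWithin k f S) S) S :=
        (ih (m+1)).derivWithin hS (by exact_mod_cast le_refl ((m:ℕ∞)+1))
      exact h1.congr fun x hx => congrFun iteratedDerivWithin_succ x

lemma exists_bound {a b : ℝ} (hab : a ≤ b) (F : ℝ → ℝ) (hF : ContinuousOn F (Icc a b)) :
    ∃ C : ℝ, 0 ≤ C ∧ ∀ x ∈ Icc a b, |F x| ≤ C := by
  obtain ⟨C, hC⟩ := (isCompact_Icc).exists_bound_of_continuousOn hF
  refine ⟨max C 0, le_max_right _ _, fun x hx => ?_⟩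
  have := hC x hx
  rw [Real.norm_eq_abs] at this
  exact this.trans (le_max_left _ _)

lemma exists_unif_bound {a b : ℝ} (hab : a ≤ b) (N : ℕ) (f : ℕ → ℝ → ℝ)
    (hf : ∀ i, ContinuousOn (f i) (Icc a b)) :
    ∃ C, 0 ≤ C ∧ ∀ u ∈ Icc a b, ∀ i < N, |f i u| ≤ C := by
  obtain ⟨C, hC0, hC⟩ := exists_bound hab (fun u => ∑ i ∈ Finset.range N, |f i u|)
    (continuousOn_finset_sum _ fun i _ => (hf i).abs)
  refine ⟨C, hC0, fun u hu i hi => ?_⟩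
  have h1 : |f i u| ≤ ∑ j ∈ Finset.range N, |f j u| :=
    Finset.single_le_sum (f := fun j => |f j u|) (fun j _ => abs_nonneg _) (Finset.mem_range.2 hi)
  have h2 := hC u hu
  rw [abs_of_nonneg (Finset.sum_nonneg fun j _ => abs_nonneg _)] at h2
  exact h1.trans h2

lemma exists_unif_bound2 {a b : ℝ} (hab : a ≤ b) (N M : ℕ) (f : ℕ → ℕ → ℝ → ℝ)
    (hf : ∀ i j, ContinuousOn (f i j) (Icc a b)) :
    ∃ C, 0 ≤ C ∧ ∀ u ∈ Icc a b, ∀ i < N, ∀ j < M, |f i j u| ≤ C := by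
  obtain ⟨C, hC0, hC⟩ := exists_bound hab
    (fun u => ∑ i ∈ Finset.range N, ∑ j ∈ Finset.range M, |f i j u|)
    (continuousOn_finset_sum _ fun i _ => continuousOn_finset_sum _ fun j _ => (hf i j).abs)
  refine ⟨C, hC0, fun u hu i hi j hj => ?_⟩
  have h1 : |f i j u| ≤ ∑ j' ∈ Finset.range M, |f i j' u| :=
    Finset.single_le_sum (f := fun j' => |f i j' u|) (fun j' _ => abs_nonneg _)
      (Finset.mem_range.2 hj)
  have h2 : (∑ j' ∈ Finset.range M, |f i j' u|)
      ≤ ∑ i' ∈ Finset.range N, ∑ j' ∈ Finset.range M, |f i' j' u| :=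
    Finset.single_le_sum (f := fun i' => ∑ j' ∈ Finset.range M, |f i' j' u|)
      (fun i' _ => Finset.sum_nonneg fun j' _ => abs_nonneg _) (Finset.mem_range.2 hi)
  have h3 := hC u hu
  rw [abs_of_nonneg (Finset.sum_nonneg fun i' _ =>
    Finset.sum_nonneg fun j' _ => abs_nonneg _)] at h3
  exact (h1.trans h2).trans h3

lemma abs_pow_sub_pow_le {x y M : ℝ} (hM : 1 ≤ M) (hx : |x| ≤ M) (hy : |y| ≤ M) (i : ℕ) :
    |x ^ i - y ^ i| ≤ i * M ^ i * |x - y| := by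
  induction i with
  | zero => simp
  | succ i ih =>
      have hM0 : (0:ℝ) ≤ M := le_trans zero_le_one hM
      have key : x ^ (i+1) - y ^ (i+1) = x * (x ^ i - y ^ i) + (x - y) * y ^ i := by ring
      have h1 : |x * (x ^ i - y ^ i)| ≤ M * (i * M ^ i * |x - y|) := by
        rw [abs_mul]
        exact mul_le_mul hx ih (abs_nonneg _) hM0
      have h2 : |(x - y) * y ^ i| ≤ |x - y| * M ^ i := by
        rw [abs_mul, abs_pow]
        exact mul_le_mul_of_nonneg_left (pow_le_pow_left₀ (abs_nonneg _) hy i) (abs_nonneg _)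
      calc |x ^ (i+1) - y ^ (i+1)| ≤ |x * (x ^ i - y ^ i)| + |(x - y) * y ^ i| := by
            rw [key]; exact abs_add_le _ _
        _ ≤ M * (i * M ^ i * |x - y|) + |x - y| * M ^ i := add_le_add h1 h2
        _ ≤ (i+1 : ℕ) * M ^ (i+1) * |x - y| := by
            have hMp : M ^ i ≤ M ^ (i+1) := by
              calc M ^ i = 1 * M ^ i := (one_mul _).symm
                _ ≤ M * M ^ i := by
                    exact mul_le_mul_of_nonneg_right hM (pow_nonneg hM0 i)
                _ = M ^ (i+1) := by ring
            have h3 : M * (↑i * M ^ i * |x - y|) = ↑i * (M * M ^ i) * |x - y| := by ring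
            have h4 : M * M ^ i = M ^ (i+1) := by ring
            have h5 : M * (↑i * M ^ i * |x - y|) ≤ ↑i * M ^ (i+1) * |x - y| := by
              rw [h3, h4]
            have h6 : |x - y| * M ^ i ≤ |x - y| * M ^ (i+1) :=
              mul_le_mul_of_nonneg_left hMp (abs_nonneg _)
            push_cast
            nlinarith [abs_nonneg (x - y)]

lemma mvt_aux {F E : ℝ → ℝ} {s : Set ℝ} {c d x₀ x : ℝ} (hsub : Icc c d ⊆ s)
    (hx₀ : x₀ ∈ Icc c d) (hx : x ∈ Icc c d)
    (hF : ∀ t ∈ s, HasDerivWithinAt F (E t) s t) {C : ℝ}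
    (hE : ∀ t ∈ Icc c d, |E t| ≤ C) : |F x - F x₀| ≤ C * |x - x₀| := by
  have := (convex_Icc c d).norm_image_sub_le_of_norm_hasDerivWithin_le
    (f := F) (f' := E) (fun t ht => (hF t (hsub ht)).mono hsub)
    (fun t ht => by simpa using hE t ht) hx₀ hx
  simpa [Real.norm_eq_abs] using this

lemma taylor_two_sided {a b : ℝ} (hab : a < b) :
    ∀ (n : ℕ) (f : ℝ → ℝ) (C : ℝ), ContDiffOn ℝ (n+1) f (Icc a b) →
    (∀ y ∈ Icc a b, |iteratedDerivWithin (n+1) f (Icc a b) y| ≤ C) →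
    ∀ x₀ ∈ Icc a b, ∀ x ∈ Icc a b,
    |f x - ∑ i ∈ Finset.range (n+1),
        iteratedDerivWithin i f (Icc a b) x₀ / (i.factorial : ℝ) * (x - x₀) ^ i|
      ≤ C * |x - x₀| ^ (n+1) := by
  have hs : UniqueDiffOn ℝ (Icc a b) := uniqueDiffOn_Icc hab
  intro n
  induction n with
  | zero =>
      intro f C hf hC x₀ hx₀ x hx
      have hdf : DifferentiableOn ℝ f (Icc a b) := hf.differentiableOn (by norm_num)
      have hb : ∀ y ∈ Icc a b, ‖derivWithin f (Icc a b) y‖ ≤ C := by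
        intro y hy
        have := hC y hy
        rw [Real.norm_eq_abs]
        rwa [iteratedDerivWithin_one] at this
      have := (convex_Icc a b).norm_image_sub_le_of_norm_derivWithin_le hdf hb hx₀ hx
      simpa [Real.norm_eq_abs] using this
  | succ n IH =>
      intro f C hf hC x₀ hx₀ x hx
      set s : Set ℝ := Icc a b with hsdef
      have hC0 : 0 ≤ C := le_trans (abs_nonneg _) (hC a (left_mem_Icc.2 hab.le))
      set f' : ℝ → ℝ := derivWithin f s with hf'def
      have hf'cd : ContDiffOn ℝ (n+1) f' s := by
        apply hf.derivWithin hs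
        exact_mod_cast le_refl ((n:ℕ∞)+2)
      have hf'C : ∀ y ∈ s, |iteratedDerivWithin (n+1) f' s y| ≤ C := by
        intro y hy
        rw [← iteratedDerivWithin_succ']
        exact hC y hy
      have IH' := IH f' C hf'cd hf'C x₀ hx₀
      set A : ℕ → ℝ := fun i => iteratedDerivWithin i f s x₀ / (i.factorial : ℝ) with hA
      set F : ℝ → ℝ := fun t => f t - ∑ i ∈ Finset.range (n+2), A i * (t - x₀) ^ i with hF
      set E : ℝ → ℝ := fun t => f' t - ∑ i ∈ Finset.range (n+1),
        iteratedDerivWithin i f' s x₀ / (i.factorial : ℝ) * (t - x₀) ^ i with hE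
      have hder : ∀ t ∈ s, HasDerivWithinAt F (E t) s t := by
        intro t ht
        have h1 : HasDerivWithinAt f (f' t) s t :=
          (hf.differentiableOn (by simp) t ht).hasDerivWithinAt
        have h2 : HasDerivAt (fun t => ∑ i ∈ Finset.range (n+2), A i * (t - x₀) ^ i)
            (∑ i ∈ Finset.range (n+2), A i * (i * (t - x₀) ^ (i-1) * 1)) t := by
          apply HasDerivAt.fun_sum
          intro i _
          exact (((hasDerivAt_id t).sub_const x₀).pow i).const_mul (A i)
        have hsum : (∑ i ∈ Finset.range (n+2), A i * (i * (t - x₀) ^ (i-1) * 1))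
            = ∑ i ∈ Finset.range (n+1),
              iteratedDerivWithin i f' s x₀ / (i.factorial : ℝ) * (t - x₀) ^ i := by
          rw [Finset.sum_range_succ']
          simp only [Nat.cast_zero, zero_mul, mul_zero, add_zero, mul_one]
          apply Finset.sum_congr rfl
          intro i _
          have hfac : ((i+1).factorial : ℝ) = (i+1) * (i.factorial : ℝ) := by
            rw [Nat.factorial_succ]; push_cast; ring
          have hit : iteratedDerivWithin (i+1) f s x₀ = iteratedDerivWithin i f' s x₀ :=
            congrFun iteratedDerivWithin_succ' x₀
          rw [hA]
          simp only [Nat.add_sub_cancel, hit, hfac]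
          have : ((i:ℝ)+1) ≠ 0 := by positivity
          field_simp
          push_cast
          ring
        have := h1.sub ((h2.congr_deriv hsum).hasDerivWithinAt)
        exact this
      have hEbound : ∀ t ∈ s, |E t| ≤ C * |t - x₀| ^ (n+1) := fun t ht => IH' t ht
      have habs : ∀ t ∈ Icc (min x₀ x) (max x₀ x), |t - x₀| ≤ |x - x₀| := by
        intro t ht
        rcases le_total x₀ x with h | h
        · rw [min_eq_left h, max_eq_right h] at ht
          rw [abs_of_nonneg (by linarith [ht.1]), abs_of_nonneg (by linarith)]
          linarith [ht.2]
        · rw [min_eq_right h, max_eq_left h] at ht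
          rw [abs_of_nonpos (by linarith [ht.2]), abs_of_nonpos (by linarith)]
          linarith [ht.1]
      have hsub : Icc (min x₀ x) (max x₀ x) ⊆ s := by
        apply Icc_subset_Icc
        · exact le_min hx₀.1 hx.1
        · exact max_le hx₀.2 hx.2
      have hmem₀ : x₀ ∈ Icc (min x₀ x) (max x₀ x) := ⟨min_le_left _ _, le_max_left _ _⟩
      have hmem : x ∈ Icc (min x₀ x) (max x₀ x) := ⟨min_le_right _ _, le_max_right _ _⟩
      have key := mvt_aux hsub hmem₀ hmem hder (C := C * |x - x₀| ^ (n+1))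
        (fun t ht => by
          calc |E t| ≤ C * |t - x₀| ^ (n+1) := hEbound t (hsub ht)
            _ ≤ C * |x - x₀| ^ (n+1) :=
              mul_le_mul_of_nonneg_left
                (pow_le_pow_left₀ (abs_nonneg _) (habs t ht) _) hC0)
      have hFx₀ : F x₀ = 0 := by
        rw [hF]
        simp only
        have : (∑ i ∈ Finset.range (n+2), A i * (x₀ - x₀) ^ i) = A 0 := by
          rw [Finset.sum_eq_single 0]
          · simp
          · intro i _ hi
            simp [sub_self, zero_pow hi]
          · simp
        rw [this, hA]
        simp
      rw [hFx₀, sub_zero] at key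
      have : |F x| ≤ C * |x - x₀| ^ (n+2) := by
        calc |F x| ≤ C * |x - x₀| ^ (n+1) * |x - x₀| := key
          _ = C * |x - x₀| ^ (n+2) := by ring
      simpa [hF] using this

/-! ### Polynomial constructions -/

noncomputable def Pd (b : ℕ → ℝ → ℝ) (p : ℕ) : ℕ → ℝ → Polynomial ℝ
  | 0 => fun _ => 0
  | m+1 => fun u => Polynomial.X * ∑ i ∈ Finset.range p, Polynomial.C (b i u) * (Pd b p m u) ^ i

noncomputable def PG (b c : ℕ → ℝ → ℝ) (p : ℕ) (u : ℝ) : Polynomial ℝ :=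
  ∑ i ∈ Finset.range (p+1), Polynomial.C (c i u) * (Pd b p p u) ^ i

def SC (S : Set ℝ) (P : ℝ → Polynomial ℝ) : Prop :=
  ∀ k m : ℕ, ContDiffOn ℝ m (fun u => (P u).coeff k) S

lemma SC.mul {S : Set ℝ} {P Q : ℝ → Polynomial ℝ} (hP : SC S P) (hQ : SC S Q) :
    SC S (fun u => P u * Q u) := by
  intro k m
  have h : (fun u => (P u * Q u).coeff k)
      = fun u => ∑ ij ∈ Finset.HasAntidiagonal.antidiagonal k, (P u).coeff ij.1 * (Q u).coeff ij.2 := by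
    funext u; rw [Polynomial.coeff_mul]
  rw [h]
  exact ContDiffOn.sum fun ij _ => (hP ij.1 m).mul (hQ ij.2 m)

lemma SC.one {S : Set ℝ} : SC S (fun _ => (1 : Polynomial ℝ)) := by
  intro k m; exact contDiffOn_const

lemma SC.pow {S : Set ℝ} {P : ℝ → Polynomial ℝ} (hP : SC S P) (i : ℕ) :
    SC S (fun u => (P u) ^ i) := by
  induction i with
  | zero => simpa using SC.one
  | succ i ih =>
      have := hP.mul ih
      intro k m
      have h : (fun u => (P u ^ (i+1)).coeff k) = fun u => (P u * P u ^ i).coeff k := by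
        funext u; rw [pow_succ, mul_comm]
      rw [h]
      exact this k m

lemma SC.C_fun {S : Set ℝ} {f : ℝ → ℝ} (hf : ∀ m : ℕ, ContDiffOn ℝ m f S) :
    SC S (fun u => Polynomial.C (f u)) := by
  intro k m
  by_cases hk : k = 0
  · subst hk
    have h : (fun u => (Polynomial.C (f u)).coeff 0) = f := by
      funext u; simp
    rw [h]; exact hf m
  · have h : (fun u => (Polynomial.C (f u)).coeff k) = fun _ => (0:ℝ) := by
      funext u; simp [Polynomial.coeff_C, hk]
    rw [h]; exact contDiffOn_const

lemma SC.sum {S : Set ℝ} {ι : Type*} (t : Finset ι) (P : ι → ℝ → Polynomial ℝ)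
    (hP : ∀ i ∈ t, SC S (P i)) : SC S (fun u => ∑ i ∈ t, P i u) := by
  intro k m
  have h : (fun u => (∑ i ∈ t, P i u).coeff k) = fun u => ∑ i ∈ t, (P i u).coeff k := by
    funext u; rw [Polynomial.finset_sum_coeff]
  rw [h]
  exact ContDiffOn.sum fun i hi => hP i hi k m

lemma SC.X_mul {S : Set ℝ} {P : ℝ → Polynomial ℝ} (hP : SC S P) :
    SC S (fun u => Polynomial.X * P u) := by
  intro k m
  cases k with
  | zero =>
      have h : (fun u => (Polynomial.X * P u).coeff 0) = fun _ => (0:ℝ) := by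
        funext u; rw [Polynomial.mul_coeff_zero]; simp
      rw [h]; exact contDiffOn_const
  | succ k =>
      have h : (fun u => (Polynomial.X * P u).coeff (k+1)) = fun u => (P u).coeff k := by
        funext u; rw [Polynomial.coeff_X_mul]
      rw [h]; exact hP k m

lemma SC_Pd {S : Set ℝ} {b : ℕ → ℝ → ℝ} {p : ℕ}
    (hb : ∀ i, ∀ m : ℕ, ContDiffOn ℝ m (b i) S) (m : ℕ) : SC S (Pd b p m) := by
  induction m with
  | zero => intro k m'; simp only [Pd]; exact contDiffOn_const
  | succ m ih =>
      show SC S (fun u => Polynomial.X * ∑ i ∈ Finset.range p,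
        Polynomial.C (b i u) * (Pd b p m u) ^ i)
      exact SC.X_mul (SC.sum _ _ fun i _ => (SC.C_fun (hb i)).mul (ih.pow i))

lemma SC_PG {S : Set ℝ} {b c : ℕ → ℝ → ℝ} {p : ℕ}
    (hb : ∀ i, ∀ m : ℕ, ContDiffOn ℝ m (b i) S)
    (hc : ∀ i, ∀ m : ℕ, ContDiffOn ℝ m (c i) S) : SC S (PG b c p) := by
  show SC S (fun u => ∑ i ∈ Finset.range (p+1), Polynomial.C (c i u) * (Pd b p p u) ^ i)
  exact SC.sum _ _ fun i _ => (SC.C_fun (hc i)).mul ((SC_Pd hb p).pow i)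

def eb (p : ℕ) : ℕ → ℕ
  | 0 => 0
  | m+1 => 1 + p * eb p m

lemma eb_step_le (p : ℕ) (hp : 1 ≤ p) (k : ℕ) : eb p k ≤ eb p (k+1) := by
  have h1 : 1 * eb p k ≤ p * eb p k := Nat.mul_le_mul_right _ hp
  rw [one_mul] at h1
  show eb p k ≤ 1 + p * eb p k
  omega

lemma eb_mono (p : ℕ) (hp : 1 ≤ p) {m m' : ℕ} (h : m ≤ m') : eb p m ≤ eb p m' := by
  obtain ⟨t, rfl⟩ := Nat.exists_eq_add_of_le h
  clear h
  induction t with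
  | zero => exact le_refl _
  | succ t ih => exact le_trans ih (eb_step_le p hp (m+t))

lemma natDegree_Pd {b : ℕ → ℝ → ℝ} {p : ℕ} (m : ℕ) (u : ℝ) :
    (Pd b p m u).natDegree ≤ eb p m := by
  induction m with
  | zero => simp [Pd, eb]
  | succ m ih =>
      show (Polynomial.X * ∑ i ∈ Finset.range p,
        Polynomial.C (b i u) * (Pd b p m u) ^ i).natDegree ≤ eb p (m+1)
      calc (Polynomial.X * ∑ i ∈ Finset.range p,
            Polynomial.C (b i u) * (Pd b p m u) ^ i).natDegree
          ≤ Polynomial.X.natDegree + (∑ i ∈ Finset.range p,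
            Polynomial.C (b i u) * (Pd b p m u) ^ i).natDegree := Polynomial.natDegree_mul_le
        _ ≤ 1 + p * eb p m := by
            apply add_le_add
            · exact Polynomial.natDegree_X_le
            · apply Polynomial.natDegree_sum_le_of_forall_le
              intro i hi
              calc (Polynomial.C (b i u) * (Pd b p m u) ^ i).natDegree
                  ≤ ((Pd b p m u) ^ i).natDegree := Polynomial.natDegree_C_mul_le _ _
                _ ≤ i * (Pd b p m u).natDegree := Polynomial.natDegree_pow_le
                _ ≤ p * eb p m :=
                    Nat.mul_le_mul (le_of_lt (Finset.mem_range.1 hi)) ih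
        _ = eb p (m+1) := rfl

lemma natDegree_PG {b c : ℕ → ℝ → ℝ} {p : ℕ} (u : ℝ) :
    (PG b c p u).natDegree ≤ (p+1) * eb p p := by
  apply Polynomial.natDegree_sum_le_of_forall_le
  intro i hi
  calc (Polynomial.C (c i u) * (Pd b p p u) ^ i).natDegree
      ≤ ((Pd b p p u) ^ i).natDegree := Polynomial.natDegree_C_mul_le _ _
    _ ≤ i * (Pd b p p u).natDegree := Polynomial.natDegree_pow_le
    _ ≤ (p+1) * eb p p :=
        Nat.mul_le_mul (Finset.mem_range.1 hi).le (natDegree_Pd p u)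

lemma Pd_coeff_zero {b : ℕ → ℝ → ℝ} {p : ℕ} (m : ℕ) (u : ℝ) :
    (Pd b p m u).coeff 0 = 0 := by
  cases m with
  | zero => simp [Pd]
  | succ m =>
      rw [show Pd b p (m+1) u
          = Polynomial.X * ∑ i ∈ Finset.range p, Polynomial.C (b i u) * (Pd b p m u) ^ i from rfl,
        Polynomial.mul_coeff_zero]
      simp

lemma pow_coeff_zero {P : Polynomial ℝ} (h : P.coeff 0 = 0) {i : ℕ} (hi : 1 ≤ i) :
    (P ^ i).coeff 0 = 0 := by
  induction i with
  | zero => omega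
  | succ i ih =>
      rw [pow_succ, Polynomial.mul_coeff_zero]
      cases Nat.eq_or_lt_of_le (Nat.one_le_iff_ne_zero.2 (by omega) : 1 ≤ i+1) with
      | _ => rw [h, mul_zero]

lemma pow_coeff_one {P : Polynomial ℝ} (h : P.coeff 0 = 0) {i : ℕ} (hi : 2 ≤ i) :
    (P ^ i).coeff 1 = 0 := by
  obtain ⟨j, rfl⟩ : ∃ j, i = j + 2 := ⟨i - 2, by omega⟩
  rw [pow_succ, Polynomial.coeff_mul]
  have h0 : Finset.HasAntidiagonal.antidiagonal 1 = {((0:ℕ),(1:ℕ)), (1,0)} := rfl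
  rw [h0]
  have h1 : (P ^ (j+1)).coeff 0 = 0 := pow_coeff_zero h (by omega)
  simp [h1, h]

lemma eval_Pd_succ (b : ℕ → ℝ → ℝ) (p m : ℕ) (u ε : ℝ) :
    (Pd b p (m+1) u).eval ε = ε * ∑ i ∈ Finset.range p, b i u * ((Pd b p m u).eval ε) ^ i := by
  rw [show Pd b p (m+1) u
      = Polynomial.X * ∑ i ∈ Finset.range p, Polynomial.C (b i u) * (Pd b p m u) ^ i from rfl]
  rw [Polynomial.eval_mul, Polynomial.eval_X, Polynomial.eval_finset_sum]
  simp

lemma eval_PG (b c : ℕ → ℝ → ℝ) (p : ℕ) (u ε : ℝ) :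
    (PG b c p u).eval ε = ∑ i ∈ Finset.range (p+1), c i u * ((Pd b p p u).eval ε) ^ i := by
  rw [PG, Polynomial.eval_finset_sum]
  simp

lemma PG_coeff (b c : ℕ → ℝ → ℝ) (p : ℕ) (u : ℝ) (k : ℕ) :
    (PG b c p u).coeff k = ∑ i ∈ Finset.range (p+1), c i u * ((Pd b p p u) ^ i).coeff k := by
  rw [PG, Polynomial.finset_sum_coeff]
  simp [Polynomial.coeff_C_mul]

lemma PG_coeff_zero (b c : ℕ → ℝ → ℝ) (p : ℕ) (u : ℝ) :
    (PG b c p u).coeff 0 = c 0 u := by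
  rw [PG_coeff]
  rw [Finset.sum_eq_single 0]
  · simp
  · intro i _ hi
    rw [pow_coeff_zero (Pd_coeff_zero p u) (by omega), mul_zero]
  · simp

lemma PG_coeff_one (b c : ℕ → ℝ → ℝ) {p : ℕ} (hp : 1 ≤ p) (u : ℝ) :
    (PG b c p u).coeff 1 = c 1 u * (Pd b p p u).coeff 1 := by
  rw [PG_coeff]
  rw [Finset.sum_eq_single 1]
  · rw [pow_one]
  · intro i _ hi
    rcases Nat.lt_or_ge i 2 with h2 | h2
    · interval_cases i
      · simp [Polynomial.coeff_one]
      · omega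
    · rw [pow_coeff_one (Pd_coeff_zero p u) h2, mul_zero]
  · intro h
    exact absurd (Finset.mem_range.2 (by omega)) h

lemma Pd_coeff_one {b : ℕ → ℝ → ℝ} {p : ℕ} (hp : 1 ≤ p) (m : ℕ) (u : ℝ) :
    (Pd b p (m+1) u).coeff 1 = b 0 u := by
  rw [show Pd b p (m+1) u
      = Polynomial.X * ∑ i ∈ Finset.range p, Polynomial.C (b i u) * (Pd b p m u) ^ i from rfl]
  rw [show (1:ℕ) = 0 + 1 from rfl, Polynomial.coeff_X_mul, Polynomial.finset_sum_coeff]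
  rw [Finset.sum_eq_single 0]
  · simp
  · intro i _ hi
    rw [Polynomial.coeff_C_mul, pow_coeff_zero (Pd_coeff_zero m u) (by omega), mul_zero]
  · intro h
    exact absurd (Finset.mem_range.2 (by omega)) h

lemma eval_tail {P : Polynomial ℝ} {D p : ℕ} {M ε : ℝ} (hD : P.natDegree ≤ D) (hpD : p ≤ D)
    (hM : ∀ k, |P.coeff k| ≤ M) (hε0 : 0 ≤ ε) (hε1 : ε ≤ 1) :
    |P.eval ε - ∑ k ∈ Finset.range (p+1), P.coeff k * ε ^ k| ≤ (D+1) * M * ε ^ (p+1) := by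
  have hM0 : 0 ≤ M := (abs_nonneg _).trans (hM 0)
  have he : P.eval ε = ∑ k ∈ Finset.range (D+1), P.coeff k * ε ^ k :=
    Polynomial.eval_eq_sum_range' (Nat.lt_succ_of_le hD) ε
  rw [he, ← Finset.sum_Ico_eq_sub _ (by omega : p+1 ≤ D+1)]
  calc |∑ k ∈ Finset.Ico (p+1) (D+1), P.coeff k * ε ^ k|
      ≤ ∑ k ∈ Finset.Ico (p+1) (D+1), |P.coeff k * ε ^ k| := Finset.abs_sum_le_sum_abs _ _
    _ ≤ ∑ _k ∈ Finset.Ico (p+1) (D+1), M * ε ^ (p+1) := by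
        apply Finset.sum_le_sum; intro k hk
        rw [abs_mul, abs_pow, abs_of_nonneg hε0]
        exact mul_le_mul (hM k) (pow_le_pow_of_le_one hε0 hε1 (Finset.mem_Ico.1 hk).1)
          (pow_nonneg hε0 k) hM0
    _ = ((Finset.Ico (p+1) (D+1)).card : ℝ) * (M * ε ^ (p+1)) := by
        rw [Finset.sum_const, nsmul_eq_mul]
    _ ≤ (D+1 : ℝ) * (M * ε ^ (p+1)) := by
        apply mul_le_mul_of_nonneg_right _ (by positivity)
        rw [Nat.card_Ico]
        exact_mod_cast (by omega : D + 1 - (p+1) ≤ D + 1)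
    _ = (D+1 : ℝ) * M * ε ^ (p+1) := by ring

lemma eval_abs_le {P : Polynomial ℝ} {D : ℕ} {M ε : ℝ} (hD : P.natDegree ≤ D)
    (hM : ∀ k ≤ D, |P.coeff k| ≤ M) (hε0 : 0 ≤ ε) (hε1 : ε ≤ 1) :
    |P.eval ε| ≤ (D+1) * M := by
  have hM0 : 0 ≤ M := (abs_nonneg _).trans (hM 0 (Nat.zero_le _))
  rw [Polynomial.eval_eq_sum_range' (Nat.lt_succ_of_le hD)]
  calc |∑ k ∈ Finset.range (D+1), P.coeff k * ε ^ k|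
      ≤ ∑ k ∈ Finset.range (D+1), |P.coeff k * ε ^ k| := Finset.abs_sum_le_sum_abs _ _
    _ ≤ ∑ _k ∈ Finset.range (D+1), M := by
        apply Finset.sum_le_sum; intro k hk
        rw [abs_mul, abs_pow, abs_of_nonneg hε0]
        calc |P.coeff k| * ε ^ k ≤ M * 1 :=
              mul_le_mul (hM k (by have := Finset.mem_range.1 hk; omega))
                (pow_le_one₀ hε0 hε1) (pow_nonneg hε0 k) hM0
          _ = M := mul_one M
    _ = (D+1 : ℝ) * M := by
        rw [Finset.sum_const, nsmul_eq_mul, Finset.card_range]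
        push_cast; ring

end Stmt5Aux

namespace Stmt5Aux

lemma sum_pow_diff_bound {N : ℕ} {aa : ℕ → ℝ} {Γ Θ x y : ℝ} (hΓ0 : 0 ≤ Γ) (hΘ1 : 1 ≤ Θ)
    (ha : ∀ i < N, |aa i| ≤ Γ) (hx : |x| ≤ Θ) (hy : |y| ≤ Θ) :
    |∑ i ∈ Finset.range N, aa i * (x ^ i - y ^ i)| ≤ ((N:ℕ):ℝ)^2 * Γ * Θ ^ N * |x - y| := by
  have hΘ0 : (0:ℝ) ≤ Θ := le_trans zero_le_one hΘ1
  calc |∑ i ∈ Finset.range N, aa i * (x ^ i - y ^ i)|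
      ≤ ∑ i ∈ Finset.range N, |aa i * (x ^ i - y ^ i)| := Finset.abs_sum_le_sum_abs _ _
    _ ≤ ∑ _i ∈ Finset.range N, Γ * ((N:ℝ) * Θ ^ N * |x - y|) := by
        apply Finset.sum_le_sum; intro i hi
        rw [abs_mul]
        apply mul_le_mul (ha i (Finset.mem_range.1 hi)) ?_ (abs_nonneg _) hΓ0
        calc |x ^ i - y ^ i| ≤ i * Θ ^ i * |x - y| := abs_pow_sub_pow_le hΘ1 hx hy i
          _ ≤ (N:ℝ) * Θ ^ N * |x - y| := by
              apply mul_le_mul_of_nonneg_right ?_ (abs_nonneg _)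
              apply mul_le_mul ?_ (pow_le_pow_right₀ hΘ1 (Finset.mem_range.1 hi).le)
                (pow_nonneg hΘ0 i) (by positivity)
              exact_mod_cast (Finset.mem_range.1 hi).le
    _ = (N:ℝ) * (Γ * ((N:ℝ) * Θ ^ N * |x - y|)) := by
        rw [Finset.sum_const, Finset.card_range, nsmul_eq_mul]
    _ = ((N:ℕ):ℝ)^2 * Γ * Θ ^ N * |x - y| := by push_cast; ring

end Stmt5Aux

set_option maxHeartbeats 1000000 in
open Stmt5Aux in
theorem stmt5 (s : ℝ) (hs : 0 < s) (J : Set (ℕ × ℕ))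
    (hJ : ∀ nj ∈ J, 1 ≤ nj.2 ∧ nj.2 ≤ nj.1)
    (eta : ℝ → ℝ) (heta : ∀ m : ℕ, ContDiffOn ℝ m eta (Set.Icc 0 Real.pi))
    (p : ℕ) (hp : 1 ≤ p) (A : ℝ) (hA : 0 < A)
    (rho : ℕ → ℕ → ℝ → ℝ)
    (hrho : ∀ nj ∈ J, ∀ x ∈ Set.Icc (0 : ℝ) Real.pi,
      |rho nj.1 nj.2 x| ≤ A / ((nj.1 : ℝ) + s) ^ (p + 1))
    (phi : ℕ → ℕ → ℝ)
    (hphi : ∀ nj ∈ J,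
      phi nj.1 nj.2 ∈ Set.Icc (0 : ℝ) Real.pi ∧
      phi nj.1 nj.2 = (nj.2 : ℝ) * Real.pi / ((nj.1 : ℝ) + s)
        + eta (phi nj.1 nj.2) / ((nj.1 : ℝ) + s) + rho nj.1 nj.2 (phi nj.1 nj.2) ∧
      ∀ x ∈ Set.Icc (0 : ℝ) Real.pi,
        x = (nj.2 : ℝ) * Real.pi / ((nj.1 : ℝ) + s)
          + eta x / ((nj.1 : ℝ) + s) + rho nj.1 nj.2 x → x = phi nj.1 nj.2)
    (g : ℝ → ℝ) (hg : ∀ m : ℕ, ContDiff ℝ m g)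
    (hper : Function.Periodic g (2 * Real.pi))
    (heven : ∀ x, g (-x) = g x)
    (hincr : StrictMonoOn g (Set.Icc 0 Real.pi))
    (lam : ℕ → ℕ → ℝ)
    (hlam : ∀ nj ∈ J, lam nj.1 nj.2 = g (phi nj.1 nj.2)) :
    ∃ (d : ℕ → ℝ → ℝ) (R : ℝ),
      (∀ k ≤ p, ∀ m : ℕ, ContDiffOn ℝ m (d k) (Set.Icc 0 Real.pi)) ∧
      (∀ x ∈ Set.Icc (0 : ℝ) Real.pi, d 0 x = g x) ∧
      (∀ x ∈ Set.Icc (0 : ℝ) Real.pi, d 1 x = deriv g x * eta x) ∧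
      0 < R ∧
      ∀ nj ∈ J,
        |lam nj.1 nj.2 - ∑ k ∈ Finset.range (p + 1),
            d k ((nj.2 : ℝ) * Real.pi / ((nj.1 : ℝ) + s)) / ((nj.1 : ℝ) + s) ^ k|
          ≤ R / ((nj.1 : ℝ) + s) ^ (p + 1) := by
  obtain ⟨q, rfl⟩ : ∃ q, p = q + 1 := ⟨p - 1, by omega⟩
  clear hp
  have hπ : (0:ℝ) < Real.pi := Real.pi_pos
  set S : Set ℝ := Set.Icc 0 Real.pi with hSdef
  have hS : UniqueDiffOn ℝ S := uniqueDiffOn_Icc hπ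
  set b : ℕ → ℝ → ℝ := fun i u => iteratedDerivWithin i eta S u / (i.factorial : ℝ) with hbdef
  set c : ℕ → ℝ → ℝ := fun i u => iteratedDerivWithin i g S u / (i.factorial : ℝ) with hcdef
  have hgm : ∀ m : ℕ, ContDiffOn ℝ m g S := fun m => (hg m).contDiffOn
  have hb : ∀ i, ∀ m : ℕ, ContDiffOn ℝ m (b i) S := fun i m =>
    (smooth_itdw hS heta i m).div_const _
  have hc : ∀ i, ∀ m : ℕ, ContDiffOn ℝ m (c i) S := fun i m =>
    (smooth_itdw hS hgm i m).div_const _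
  set d : ℕ → ℝ → ℝ := fun k u => (PG b c (q+1) u).coeff k with hddef
  set Dd : ℕ := eb (q+1) (q+1) with hDddef
  set D : ℕ := (q+2) * Dd with hDdef
  have hDd1 : 1 ≤ Dd := by rw [hDddef]; show 1 ≤ 1 + (q+1) * eb (q+1) q; omega
  have hqD : q + 1 ≤ D := by
    have : q + 2 ≤ (q+2) * Dd := Nat.le_mul_of_pos_right _ (by omega)
    omega
  obtain ⟨Γb, hΓb0, hΓb⟩ := exists_unif_bound hπ.le (q+2) b (fun i => (hb i 0).continuousOn)
  obtain ⟨Γc, hΓc0, hΓc⟩ := exists_unif_bound hπ.le (q+2) c (fun i => (hc i 0).continuousOn)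
  obtain ⟨B, hB0, hB⟩ := exists_unif_bound2 hπ.le (q+2) (Dd+1)
    (fun m k u => (Pd b (q+1) m u).coeff k) (fun m k => (SC_Pd hb m k 0).continuousOn)
  obtain ⟨MG, hMG0, hMG⟩ := exists_unif_bound hπ.le (D+1)
    (fun k u => (PG b c (q+1) u).coeff k) (fun k => (SC_PG hb hc k 0).continuousOn)
  obtain ⟨Cη, hCη0, hCη⟩ := exists_bound hπ.le (iteratedDerivWithin (q+1) eta S)
    ((smooth_itdw hS heta (q+1) 0).continuousOn)
  obtain ⟨Cg, hCg0, hCg⟩ := exists_bound hπ.le (iteratedDerivWithin (q+2) g S)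
    ((smooth_itdw hS hgm (q+2) 0).continuousOn)
  set Θ : ℝ := max 1 (max Real.pi (((Dd:ℝ)+1) * B)) with hΘdef
  have hΘ1 : 1 ≤ Θ := le_max_left _ _
  have hΘ0 : 0 ≤ Θ := le_trans zero_le_one hΘ1
  set K : ℝ := Γb + A with hKdef
  have hK0 : 0 ≤ K := by rw [hKdef]; linarith
  set Γt : ℝ := ((q+1:ℕ):ℝ)^2 * Γb * Θ^(q+1) with hΓtdef
  have hΓt0 : 0 ≤ Γt := by rw [hΓtdef]; positivity
  set CC : ℝ := A + Cη * K^(q+1) with hCCdef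
  have hCC0 : 0 ≤ CC := by rw [hCCdef]; positivity
  set Km : ℕ → ℝ := fun m => Nat.rec (motive := fun _ => ℝ) K (fun _ ih => Γt * ih + CC) m
    with hKmdef
  have hKmsucc : ∀ m, Km (m+1) = Γt * Km m + CC := fun m => rfl
  have hKmzero : Km 0 = K := rfl
  have hKm0 : ∀ m, 0 ≤ Km m := by
    intro m
    induction m with
    | zero => rw [hKmzero]; exact hK0
    | succ m ih => rw [hKmsucc]; positivity
  set Γc2 : ℝ := ((q+2:ℕ):ℝ)^2 * Γc * Θ^(q+2) with hΓc2def
  set R' : ℝ := Cg * K^(q+2) + Γc2 * Km (q+1) + ((D:ℝ)+1) * MG with hR'def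
  have hR'0 : 0 ≤ R' := by
    rw [hR'def, hΓc2def]
    have := hKm0 (q+1)
    positivity
  set R : ℝ := max R' 1 with hRdef
  -- Taylor expansions
  have hTeta : ∀ x₀ ∈ S, ∀ x ∈ S,
      |eta x - ∑ i ∈ Finset.range (q+1), b i x₀ * (x - x₀)^i| ≤ Cη * |x - x₀|^(q+1) := by
    intro x₀ h0 x hx
    have := taylor_two_sided hπ q eta Cη (by exact_mod_cast heta (q+1)) hCη x₀ h0 x hx
    simpa [hbdef] using this
  have hTg : ∀ x₀ ∈ S, ∀ x ∈ S,
      |g x - ∑ i ∈ Finset.range (q+2), c i x₀ * (x - x₀)^i| ≤ Cg * |x - x₀|^(q+2) := by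
    intro x₀ h0 x hx
    have := taylor_two_sided hπ (q+1) g Cg (by exact_mod_cast hgm (q+2)) hCg x₀ h0 x hx
    simpa [hcdef] using this
  -- the key estimate
  have key : ∀ u ∈ S, ∀ φ ∈ S, ∀ ε r : ℝ, 0 < ε → ε ≤ 1 → |r| ≤ A * ε^(q+2) →
      φ = u + ε * eta φ + r →
      |g φ - ∑ k ∈ Finset.range (q+2), d k u * ε ^ k| ≤ R' * ε^(q+2) := by
    intro u hu φ hφ ε r hε0 hε1 hr hφeq
    have huS : 0 ≤ u ∧ u ≤ Real.pi := by simpa [hSdef] using hu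
    have hφS : 0 ≤ φ ∧ φ ≤ Real.pi := by simpa [hSdef] using hφ
    set δ : ℝ := φ - u with hδdef
    have hδ : δ = ε * eta φ + r := by rw [hδdef]; linarith [hφeq]
    have hetaφ : |eta φ| ≤ Γb := by
      have := hΓb φ hφ 0 (by omega)
      simpa [hbdef] using this
    have hεp : ε^(q+2) ≤ ε := by
      calc ε^(q+2) ≤ ε^1 := pow_le_pow_of_le_one hε0.le hε1 (by omega)
        _ = ε := pow_one ε
    have hδK : |δ| ≤ K * ε := by
      rw [hδ]
      calc |ε * eta φ + r| ≤ |ε * eta φ| + |r| := abs_add_le _ _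
        _ ≤ ε * Γb + A * ε^(q+2) := by
            rw [abs_mul, abs_of_pos hε0]
            exact add_le_add (mul_le_mul_of_nonneg_left hetaφ hε0.le) hr
        _ ≤ Γb * ε + A * ε := by nlinarith
        _ = K * ε := by rw [hKdef]; ring
    have hδπ : |δ| ≤ Real.pi := by
      rw [hδdef, abs_le]
      constructor
      · linarith [hφS.1, huS.2]
      · linarith [hφS.2, huS.1]
    have hδΘ : |δ| ≤ Θ := hδπ.trans ((le_max_left _ _).trans (le_max_right 1 _))
    have hDm : ∀ m ≤ q+1, |(Pd b (q+1) m u).eval ε| ≤ Θ := by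
      intro m hm
      have h1 : (Pd b (q+1) m u).natDegree ≤ Dd :=
        (natDegree_Pd m u).trans (eb_mono (q+1) (by omega) hm)
      have h2 := eval_abs_le h1 (fun k hk => hB u hu m (by omega) k (by omega)) hε0.le hε1
      exact h2.trans ((le_max_right Real.pi _).trans (le_max_right 1 _))
    have contr : ∀ m, m ≤ q+1 → |δ - (Pd b (q+1) m u).eval ε| ≤ Km m * ε ^ (min (m+1) (q+2)) := by
      intro m hmq
      induction m with
      | zero =>
          have h0 : (Pd b (q+1) 0 u).eval ε = 0 := by
            rw [show Pd b (q+1) 0 u = 0 from rfl]; simp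
          rw [h0, sub_zero, (by omega : min (0+1) (q+2) = 1), pow_one, hKmzero]
          exact hδK
      | succ m ih =>
          have ihm := ih (by omega)
          have hmle : m ≤ q+1 := by omega
          have hrec := eval_Pd_succ b (q+1) m u ε
          have hT := hTeta u hu φ hφ
          set rη : ℝ := eta φ - ∑ i ∈ Finset.range (q+1), b i u * δ ^ i with hrηdef
          have hTr : |rη| ≤ Cη * |δ|^(q+1) := by
            rw [hrηdef, hδdef]
            exact hT
          set Dm : ℝ := (Pd b (q+1) m u).eval ε with hDmdef
          have hδexp : δ = ε * (∑ i ∈ Finset.range (q+1), b i u * δ^i) + (ε * rη + r) := by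
            rw [hrηdef]
            nth_rewrite 1 [hδ]
            ring
          have hsplit : (∑ i ∈ Finset.range (q+1), b i u * (δ^i - Dm^i))
              = (∑ i ∈ Finset.range (q+1), b i u * δ^i)
                - (∑ i ∈ Finset.range (q+1), b i u * Dm^i) := by
            rw [← Finset.sum_sub_distrib]
            exact Finset.sum_congr rfl fun i _ => by ring
          have hdiff : δ - (Pd b (q+1) (m+1) u).eval ε
              = ε * (∑ i ∈ Finset.range (q+1), b i u * (δ^i - Dm^i)) + (ε * rη + r) := by
            rw [hrec, hsplit]
            nth_rewrite 1 [hδexp]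
            ring
          have hsumb : |∑ i ∈ Finset.range (q+1), b i u * (δ^i - Dm^i)| ≤ Γt * |δ - Dm| := by
            have := sum_pow_diff_bound (N := q+1) (aa := fun i => b i u) hΓb0 hΘ1
              (fun i hi => hΓb u hu i (by omega)) hδΘ (hDm m hmle)
            calc |∑ i ∈ Finset.range (q+1), b i u * (δ^i - Dm^i)|
                ≤ ((q+1:ℕ):ℝ)^2 * Γb * Θ^(q+1) * |δ - Dm| := this
              _ = Γt * |δ - Dm| := by rw [hΓtdef]
          have hεr : |ε * rη + r| ≤ CC * ε^(q+2) := by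
            have h1 : |rη| ≤ Cη * (K * ε)^(q+1) :=
              hTr.trans (mul_le_mul_of_nonneg_left
                (pow_le_pow_left₀ (abs_nonneg _) hδK _) hCη0)
            calc |ε * rη + r| ≤ |ε * rη| + |r| := abs_add_le _ _
              _ ≤ ε * (Cη * (K * ε)^(q+1)) + A * ε^(q+2) := by
                  rw [abs_mul, abs_of_pos hε0]
                  exact add_le_add (mul_le_mul_of_nonneg_left h1 hε0.le) hr
              _ = CC * ε^(q+2) := by rw [hCCdef, mul_pow]; ring
          have hstep : |δ - (Pd b (q+1) (m+1) u).eval ε|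
              ≤ ε * (Γt * |δ - Dm|) + CC * ε^(q+2) := by
            rw [hdiff]
            calc |ε * (∑ i ∈ Finset.range (q+1), b i u * (δ^i - Dm^i)) + (ε * rη + r)|
                ≤ |ε * (∑ i ∈ Finset.range (q+1), b i u * (δ^i - Dm^i))| + |ε * rη + r| :=
                  abs_add_le _ _
              _ ≤ ε * (Γt * |δ - Dm|) + CC * ε^(q+2) := by
                  rw [abs_mul, abs_of_pos hε0]
                  exact add_le_add (mul_le_mul_of_nonneg_left hsumb hε0.le) hεr
          have hmono1 : ε * ε ^ (min (m+1) (q+2)) ≤ ε ^ (min (m+2) (q+2)) := by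
            rw [← pow_succ']
            exact pow_le_pow_of_le_one hε0.le hε1 (by omega)
          have hmono2 : ε^(q+2) ≤ ε ^ (min (m+2) (q+2)) :=
            pow_le_pow_of_le_one hε0.le hε1 (by omega)
          have : |δ - (Pd b (q+1) (m+1) u).eval ε|
              ≤ Γt * Km m * ε ^ (min (m+2) (q+2)) + CC * ε ^ (min (m+2) (q+2)) := by
            refine hstep.trans (add_le_add ?_ (mul_le_mul_of_nonneg_left hmono2 hCC0))
            calc ε * (Γt * |δ - Dm|) ≤ ε * (Γt * (Km m * ε ^ (min (m+1) (q+2)))) := by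
                  apply mul_le_mul_of_nonneg_left _ hε0.le
                  exact mul_le_mul_of_nonneg_left ihm hΓt0
              _ = Γt * Km m * (ε * ε ^ (min (m+1) (q+2))) := by ring
              _ ≤ Γt * Km m * ε ^ (min (m+2) (q+2)) := by
                  apply mul_le_mul_of_nonneg_left hmono1
                  exact mul_nonneg hΓt0 (hKm0 m)
          refine this.trans (le_of_eq ?_)
          rw [hKmsucc, (by omega : min (m+1+1) (q+2) = min (m+2) (q+2))]
          ring
    have hcontr : |δ - (Pd b (q+1) (q+1) u).eval ε| ≤ Km (q+1) * ε ^ (q+2) := by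
      have := contr (q+1) le_rfl
      rwa [(by omega : min (q+1+1) (q+2) = q+2)] at this
    set Dp : ℝ := (Pd b (q+1) (q+1) u).eval ε with hDpdef
    have ht1 : |g φ - ∑ i ∈ Finset.range (q+2), c i u * δ^i| ≤ Cg * K^(q+2) * ε^(q+2) := by
      have := hTg u hu φ hφ
      rw [← hδdef] at this
      refine this.trans ?_
      calc Cg * |δ|^(q+2) ≤ Cg * (K * ε)^(q+2) :=
            mul_le_mul_of_nonneg_left (pow_le_pow_left₀ (abs_nonneg _) hδK _) hCg0
        _ = Cg * K^(q+2) * ε^(q+2) := by rw [mul_pow]; ring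
    have ht2 : |∑ i ∈ Finset.range (q+2), c i u * (δ^i - Dp^i)|
        ≤ Γc2 * (Km (q+1) * ε^(q+2)) := by
      have h1 := sum_pow_diff_bound (N := q+2) (aa := fun i => c i u) hΓc0 hΘ1
        (fun i hi => hΓc u hu i (by omega)) hδΘ (hDm (q+1) le_rfl)
      calc |∑ i ∈ Finset.range (q+2), c i u * (δ^i - Dp^i)|
          ≤ ((q+2:ℕ):ℝ)^2 * Γc * Θ^(q+2) * |δ - Dp| := h1
        _ ≤ ((q+2:ℕ):ℝ)^2 * Γc * Θ^(q+2) * (Km (q+1) * ε^(q+2)) := by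
            apply mul_le_mul_of_nonneg_left hcontr
            positivity
        _ = Γc2 * (Km (q+1) * ε^(q+2)) := by rw [hΓc2def]
    have hMGall : ∀ k, |(PG b c (q+1) u).coeff k| ≤ MG := by
      intro k
      by_cases hk : k ≤ D
      · exact hMG u hu k (by omega)
      · rw [Polynomial.coeff_eq_zero_of_natDegree_lt
          (lt_of_le_of_lt (natDegree_PG u)
            (by have h2 : D = (q+1+1) * eb (q+1) (q+1) := by rw [hDdef, hDddef]
                rw [← h2]
                omega))]
        simpa using hMG0
    have ht3 : |(PG b c (q+1) u).eval ε - ∑ k ∈ Finset.range (q+2), d k u * ε^k|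
        ≤ ((D:ℝ)+1) * MG * ε^(q+2) := by
      have := eval_tail (p := q+1) (natDegree_PG u |>.trans (le_of_eq hDdef.symm))
        hqD hMGall hε0.le hε1
      simpa [hddef] using this
    have hePG : (PG b c (q+1) u).eval ε = ∑ i ∈ Finset.range (q+2), c i u * Dp^i :=
      eval_PG b c (q+1) u ε
    have hsplit2 : (∑ i ∈ Finset.range (q+2), c i u * (δ^i - Dp^i))
        = (∑ i ∈ Finset.range (q+2), c i u * δ^i)
          - (∑ i ∈ Finset.range (q+2), c i u * Dp^i) := by
      rw [← Finset.sum_sub_distrib]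
      exact Finset.sum_congr rfl fun i _ => by ring
    have hdecomp : g φ - ∑ k ∈ Finset.range (q+2), d k u * ε^k
        = (g φ - ∑ i ∈ Finset.range (q+2), c i u * δ^i)
          + (∑ i ∈ Finset.range (q+2), c i u * (δ^i - Dp^i))
          + ((PG b c (q+1) u).eval ε - ∑ k ∈ Finset.range (q+2), d k u * ε^k) := by
      rw [hePG, hsplit2]; ring
    calc |g φ - ∑ k ∈ Finset.range (q+2), d k u * ε ^ k|
        ≤ |g φ - ∑ i ∈ Finset.range (q+2), c i u * δ^i|
          + |∑ i ∈ Finset.range (q+2), c i u * (δ^i - Dp^i)|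
          + |(PG b c (q+1) u).eval ε - ∑ k ∈ Finset.range (q+2), d k u * ε^k| := by
          rw [hdecomp]
          exact (abs_add_le _ _).trans (add_le_add_left (abs_add_le _ _) _)
      _ ≤ Cg * K^(q+2) * ε^(q+2) + Γc2 * (Km (q+1) * ε^(q+2)) + ((D:ℝ)+1) * MG * ε^(q+2) :=
          add_le_add (add_le_add ht1 ht2) ht3
      _ = R' * ε^(q+2) := by rw [hR'def]; ring
  -- conclusion
  refine ⟨d, R, ?_, ?_, ?_, ?_, ?_⟩
  · intro k _ m
    exact SC_PG hb hc k m
  · intro x hx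
    have h0 := PG_coeff_zero b c (q+1) x
    rw [hddef]
    simp only []
    rw [h0, hcdef]
    simp
  · intro x hx
    rw [hddef]
    simp only []
    rw [PG_coeff_one b c (by omega) x, Pd_coeff_one (by omega) q x]
    have hgd : Differentiable ℝ g := (hg 1).differentiable (by norm_num)
    have hc1 : c 1 x = deriv g x := by
      rw [hcdef]
      simp only []
      rw [iteratedDerivWithin_one,
        DifferentiableAt.derivWithin (hgd.differentiableAt) (hS x hx)]
      simp
    have hb0 : b 0 x = eta x := by rw [hbdef]; simp
    rw [hc1, hb0]
  · exact lt_of_lt_of_le one_pos (le_max_right R' 1)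
  · intro nj hnj
    obtain ⟨hj1, hjn⟩ := hJ nj hnj
    obtain ⟨hφS, hφe, -⟩ := hphi nj hnj
    have hlam' := hlam nj hnj
    set nR : ℝ := (nj.1 : ℝ) + s with hnRdef
    have hn1 : (1:ℝ) ≤ (nj.1:ℝ) := by exact_mod_cast le_trans hj1 hjn
    have hnR1 : 1 < nR := by rw [hnRdef]; linarith
    have hnR0 : 0 < nR := by linarith
    set ε : ℝ := 1 / nR with hεdef
    have hε0 : 0 < ε := by positivity
    have hε1 : ε ≤ 1 := by rw [hεdef, div_le_one hnR0]; linarith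
    set u : ℝ := (nj.2:ℝ) * Real.pi / nR with hudef
    have hjn' : (nj.2:ℝ) ≤ nR := by
      have : (nj.2:ℝ) ≤ (nj.1:ℝ) := by exact_mod_cast hjn
      rw [hnRdef]; linarith
    have hu : u ∈ S := by
      rw [hSdef, Set.mem_Icc, hudef]
      constructor
      · positivity
      · rw [div_le_iff₀ hnR0]
        nlinarith [hπ.le]
    have hrval : |rho nj.1 nj.2 (phi nj.1 nj.2)| ≤ A * ε^(q+2) := by
      have h1 := hrho nj hnj (phi nj.1 nj.2) hφS
      rw [hεdef, one_div, inv_pow, mul_comm A, inv_mul_eq_div]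
      exact h1
    have hφe' : phi nj.1 nj.2 = u + ε * eta (phi nj.1 nj.2) + rho nj.1 nj.2 (phi nj.1 nj.2) := by
      have h2 : eta (phi nj.1 nj.2) / nR = ε * eta (phi nj.1 nj.2) := by
        rw [hεdef, div_eq_mul_inv, one_div, mul_comm]
      nth_rewrite 1 [hφe]
      rw [h2]
    have hmain := key u hu (phi nj.1 nj.2) hφS ε (rho nj.1 nj.2 (phi nj.1 nj.2))
      hε0 hε1 hrval hφe'
    have hpowk : ∀ k : ℕ, d k u * ε ^ k = d k u / nR ^ k := by
      intro k
      rw [hεdef, one_div, inv_pow, ← div_eq_mul_inv]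
    have hsumeq : (∑ k ∈ Finset.range (q+1+1), d k u / nR ^ k)
        = ∑ k ∈ Finset.range (q+2), d k u * ε ^ k := by
      exact Finset.sum_congr rfl fun k _ => (hpowk k).symm
    rw [hlam', hsumeq]
    calc |g (phi nj.1 nj.2) - ∑ k ∈ Finset.range (q+2), d k u * ε ^ k|
        ≤ R' * ε^(q+2) := hmain
      _ ≤ R * ε^(q+2) := mul_le_mul_of_nonneg_right (le_max_left _ _) (by positivity)
      _ = R / nR^(q+1+1) := by
          rw [hεdef, one_div, inv_pow, ← div_eq_mul_inv]
end

section
/- Let p ≥ 0 be an integer, let d_0, …, d_p and d̃_0, …, d̃_p be continuous real-valued functions on [0,π], let C > 0, and let {λ_{n,j}}_{(n,j)∈J} be any family of real numbers indexed by J. Suppose J asymptotically fills [0,π] by quotients and that for every (n,j) ∈ J both inequalities hold: |λ_{n,j} − Σ_{k=0}^{p} d_k(u_{n,j})/(n+s)^k| ≤ C/(n+s)^{p+1} and |λ_{n,j} − Σ_{k=0}^{p} d̃_k(u_{n,j})/(n+s)^k| ≤ C/(n+s)^{p+1}. Then d_k(x) = d̃_k(x) for every k ∈ {0,…,p} and every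 x ∈ [0,π]. -/
open Real Set

/-- `J` asymptotically fills `[0,π]` by quotients (with shift `s`). -/
def AsymptoticallyFills (s : ℝ) (J : Set (ℕ × ℕ)) : Prop :=
  ∀ x ∈ Set.Icc (0 : ℝ) Real.pi, ∀ N : ℕ, 1 ≤ N → ∀ δ : ℝ, 0 < δ →
    ∃ nj ∈ J, N ≤ nj.1 ∧ |(nj.2 : ℝ) * Real.pi / ((nj.1 : ℝ) + s) - x| ≤ δ

theorem stmt6 (s : ℝ) (hs : 0 < s) (J : Set (ℕ × ℕ))
    (hJ : ∀ nj ∈ J, 1 ≤ nj.2 ∧ nj.2 ≤ nj.1)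
    (hfill : AsymptoticallyFills s J)
    (p : ℕ) (d dt : ℕ → ℝ → ℝ)
    (hd : ∀ k ≤ p, ContinuousOn (d k) (Set.Icc 0 Real.pi))
    (hdt : ∀ k ≤ p, ContinuousOn (dt k) (Set.Icc 0 Real.pi))
    (C : ℝ) (hC : 0 < C) (lam : ℕ → ℕ → ℝ)
    (h1 : ∀ nj ∈ J,
      |lam nj.1 nj.2 - ∑ k ∈ Finset.range (p + 1),
          d k ((nj.2 : ℝ) * Real.pi / ((nj.1 : ℝ) + s)) / ((nj.1 : ℝ) + s) ^ k|
        ≤ C / ((nj.1 : ℝ) + s) ^ (p + 1))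
    (h2 : ∀ nj ∈ J,
      |lam nj.1 nj.2 - ∑ k ∈ Finset.range (p + 1),
          dt k ((nj.2 : ℝ) * Real.pi / ((nj.1 : ℝ) + s)) / ((nj.1 : ℝ) + s) ^ k|
        ≤ C / ((nj.1 : ℝ) + s) ^ (p + 1)) :
    ∀ k ≤ p, ∀ x ∈ Set.Icc (0 : ℝ) Real.pi, d k x = dt k x := by
  -- uniform bound M for the sum of |d k - dt k| over k ≤ p on [0,π]
  have hFcont : ContinuousOn (fun x => ∑ k ∈ Finset.range (p + 1), |d k x - dt k x|)
      (Set.Icc (0 : ℝ) Real.pi) := by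
    apply continuousOn_finset_sum
    intro k hk
    have hk' : k ≤ p := Finset.mem_range_succ_iff.mp hk
    exact ((hd k hk').sub (hdt k hk')).abs
  obtain ⟨M0, hM0⟩ := isCompact_Icc.exists_bound_of_continuousOn hFcont
  set M : ℝ := max M0 0 with hMdef
  have hMnonneg : 0 ≤ M := le_max_right _ _
  have hM : ∀ x ∈ Set.Icc (0 : ℝ) Real.pi,
      ∑ k ∈ Finset.range (p + 1), |d k x - dt k x| ≤ M := by
    intro x hx
    have := hM0 x hx
    rw [Real.norm_eq_abs] at this
    exact le_trans (le_abs_self _) (le_trans this (le_max_left _ _))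
  -- the inductive step
  have step : ∀ m ≤ p, (∀ k < m, ∀ x ∈ Set.Icc (0 : ℝ) Real.pi, d k x = dt k x) →
      ∀ x ∈ Set.Icc (0 : ℝ) Real.pi, d m x = dt m x := by
    intro m hm ih x hx
    have key : ∀ ε > (0 : ℝ), |d m x - dt m x| ≤ ε := by
      intro ε hε
      have hc : ContinuousWithinAt (fun y => d m y - dt m y) (Set.Icc (0 : ℝ) Real.pi) x :=
        ((hd m hm).sub (hdt m hm)) x hx
      rw [Metric.continuousWithinAt_iff] at hc
      obtain ⟨δ, hδpos, hδ⟩ := hc (ε / 2) (by positivity)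
      obtain ⟨N, hN⟩ := exists_nat_ge (max 1 ((2 * C + M) / (ε / 2)))
      have hN1 : 1 ≤ N := by
        have : (1 : ℝ) ≤ (N : ℝ) := le_trans (le_max_left _ _) hN
        exact_mod_cast this
      obtain ⟨nj, hnjJ, hnjN, hnju⟩ := hfill x hx N hN1 (δ / 2) (by positivity)
      obtain ⟨n, j⟩ := nj
      simp only at hnjN hnju ⊢
      obtain ⟨hj1, hjn⟩ := hJ (n, j) hnjJ
      simp only at hj1 hjn
      set t : ℝ := (n : ℝ) + s with htdef
      set u : ℝ := (j : ℝ) * Real.pi / t with hudef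
      have hn1 : 1 ≤ n := le_trans hN1 hnjN
      have htN : (N : ℝ) ≤ t := by
        have : (N : ℝ) ≤ (n : ℝ) := by exact_mod_cast hnjN
        linarith
      have ht1 : (1 : ℝ) ≤ t := by
        have : (1 : ℝ) ≤ (n : ℝ) := by exact_mod_cast hn1
        linarith
      have htpos : (0 : ℝ) < t := lt_of_lt_of_le one_pos ht1
      have hu : u ∈ Set.Icc (0 : ℝ) Real.pi := by
        constructor
        · apply div_nonneg _ htpos.le
          positivity
        · rw [div_le_iff₀ htpos]
          have hj : (j : ℝ) ≤ t := by
            have : (j : ℝ) ≤ (n : ℝ) := by exact_mod_cast hjn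
            linarith
          nlinarith [Real.pi_pos]
      -- the key difference bound
      have hdiff : |∑ k ∈ Finset.range (p + 1), (d k u - dt k u) / t ^ k|
          ≤ 2 * C / t ^ (p + 1) := by
        have e1 := h1 (n, j) hnjJ
        have e2 := h2 (n, j) hnjJ
        simp only at e1 e2
        have hAB : ∑ k ∈ Finset.range (p + 1), (d k u - dt k u) / t ^ k
            = (∑ k ∈ Finset.range (p + 1), d k u / t ^ k)
              - ∑ k ∈ Finset.range (p + 1), dt k u / t ^ k := by
          rw [← Finset.sum_sub_distrib]
          exact Finset.sum_congr rfl fun k _ => sub_div _ _ _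
        have heq : ∑ k ∈ Finset.range (p + 1), (d k u - dt k u) / t ^ k
            = (lam n j - ∑ k ∈ Finset.range (p + 1), dt k u / t ^ k)
              - (lam n j - ∑ k ∈ Finset.range (p + 1), d k u / t ^ k) := by
          rw [hAB]; ring
        rw [heq]
        calc |(lam n j - ∑ k ∈ Finset.range (p + 1), dt k u / t ^ k)
              - (lam n j - ∑ k ∈ Finset.range (p + 1), d k u / t ^ k)|
            ≤ |lam n j - ∑ k ∈ Finset.range (p + 1), dt k u / t ^ k|
              + |lam n j - ∑ k ∈ Finset.range (p + 1), d k u / t ^ k| := abs_sub _ _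
          _ ≤ C / t ^ (p + 1) + C / t ^ (p + 1) := add_le_add e2 e1
          _ = 2 * C / t ^ (p + 1) := by ring
      -- split the sum
      have hsplit : ∑ k ∈ Finset.range (p + 1), (d k u - dt k u) / t ^ k
          = (d m u - dt m u) / t ^ m
            + ∑ k ∈ Finset.Ico (m + 1) (p + 1), (d k u - dt k u) / t ^ k := by
        rw [Finset.range_eq_Ico,
          ← Finset.sum_Ico_consecutive _ (Nat.zero_le m) (by omega : m ≤ p + 1)]
        have hzero : ∑ k ∈ Finset.Ico 0 m, (d k u - dt k u) / t ^ k = 0 := by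
          apply Finset.sum_eq_zero
          intro k hk
          have : k < m := (Finset.mem_Ico.mp hk).2
          rw [ih k this u hu, sub_self, zero_div]
        rw [hzero, zero_add, Finset.sum_eq_sum_Ico_succ_bot (by omega : m < p + 1)]
      -- bound the tail
      have htail : |∑ k ∈ Finset.Ico (m + 1) (p + 1), (d k u - dt k u) / t ^ k|
          ≤ M / t ^ (m + 1) := by
        calc |∑ k ∈ Finset.Ico (m + 1) (p + 1), (d k u - dt k u) / t ^ k|
            ≤ ∑ k ∈ Finset.Ico (m + 1) (p + 1), |(d k u - dt k u) / t ^ k| :=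
              Finset.abs_sum_le_sum_abs _ _
          _ ≤ ∑ k ∈ Finset.Ico (m + 1) (p + 1), |d k u - dt k u| / t ^ (m + 1) := by
              apply Finset.sum_le_sum
              intro k hk
              rw [abs_div, abs_of_pos (pow_pos htpos k)]
              apply div_le_div_of_nonneg_left (abs_nonneg _) (pow_pos htpos _)
              exact pow_le_pow_right₀ ht1 (Finset.mem_Ico.mp hk).1
          _ = (∑ k ∈ Finset.Ico (m + 1) (p + 1), |d k u - dt k u|) / t ^ (m + 1) := by
              rw [Finset.sum_div]
          _ ≤ M / t ^ (m + 1) := by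
              gcongr
              refine le_trans ?_ (hM u hu)
              apply Finset.sum_le_sum_of_subset_of_nonneg
              · rw [Finset.range_eq_Ico]
                exact Finset.Ico_subset_Ico (Nat.zero_le _) le_rfl
              · intro k _ _; exact abs_nonneg _
      -- bound |e m u|
      have hemu : |d m u - dt m u| ≤ (2 * C + M) / t := by
        have h1' : |(d m u - dt m u) / t ^ m|
            ≤ 2 * C / t ^ (p + 1) + M / t ^ (m + 1) := by
          have : (d m u - dt m u) / t ^ m
              = (∑ k ∈ Finset.range (p + 1), (d k u - dt k u) / t ^ k)
                - ∑ k ∈ Finset.Ico (m + 1) (p + 1), (d k u - dt k u) / t ^ k := by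
            rw [hsplit]; ring
          rw [this]
          exact le_trans (abs_sub _ _) (add_le_add hdiff htail)
        have htm : (0 : ℝ) < t ^ m := pow_pos htpos m
        have h2' : |d m u - dt m u| ≤ (2 * C / t ^ (p + 1) + M / t ^ (m + 1)) * t ^ m := by
          rw [abs_div, abs_of_pos htm, div_le_iff₀ htm] at h1'
          exact h1'
        refine le_trans h2' ?_
        have hb1 : 2 * C / t ^ (p + 1) * t ^ m ≤ 2 * C / t := by
          rw [div_mul_eq_mul_div, div_le_div_iff₀ (pow_pos htpos _) htpos]
          have : t ^ m * t ≤ t ^ (p + 1) := by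
            calc t ^ m * t = t ^ (m + 1) := by ring
              _ ≤ t ^ (p + 1) := pow_le_pow_right₀ ht1 (by omega)
          nlinarith
        have hb2 : M / t ^ (m + 1) * t ^ m ≤ M / t := by
          rw [div_mul_eq_mul_div, pow_succ, div_le_div_iff₀ (by positivity) htpos]
          nlinarith
        calc (2 * C / t ^ (p + 1) + M / t ^ (m + 1)) * t ^ m
            = 2 * C / t ^ (p + 1) * t ^ m + M / t ^ (m + 1) * t ^ m := by ring
          _ ≤ 2 * C / t + M / t := add_le_add hb1 hb2
          _ = (2 * C + M) / t := by ring
      -- finish with continuity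
      have hnear : |(d m u - dt m u) - (d m x - dt m x)| ≤ ε / 2 := by
        rcases eq_or_lt_of_le hnju with h | h
        · have hux : dist u x < δ := by
            rw [Real.dist_eq]; exact lt_of_le_of_lt hnju (by linarith)
          have := hδ hu hux
          rw [Real.dist_eq] at this
          exact le_of_lt (lt_of_lt_of_le this (by linarith))
        · have hux : dist u x < δ := by
            rw [Real.dist_eq]; exact lt_of_le_of_lt hnju (by linarith)
          have := hδ hu hux
          rw [Real.dist_eq] at this
          exact le_of_lt (lt_of_lt_of_le this (by linarith))
      have htail2 : (2 * C + M) / t ≤ ε / 2 := by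
        rw [div_le_iff₀ htpos]
        have h3 : (2 * C + M) / (ε / 2) ≤ (N : ℝ) := le_trans (le_max_right _ _) hN
        rw [div_le_iff₀ (by positivity : (0:ℝ) < ε / 2)] at h3
        nlinarith
      calc |d m x - dt m x|
          ≤ |(d m u - dt m u) - (d m x - dt m x)| + |d m u - dt m u| := by
            have h4 : d m x - dt m x
                = -((d m u - dt m u) - (d m x - dt m x)) + (d m u - dt m u) := by ring
            have h5 : |d m x - dt m x|
                = |-(d m u - dt m u - (d m x - dt m x)) + (d m u - dt m u)| := by rw [← h4]
            rw [h5]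
            exact le_trans (abs_add_le _ _) (by rw [abs_neg])
        _ ≤ ε / 2 + (2 * C + M) / t := add_le_add hnear hemu
        _ ≤ ε / 2 + ε / 2 := by linarith
        _ = ε := by ring
    have : |d m x - dt m x| ≤ 0 := le_of_forall_pos_le_add (by
      intro ε hε
      simpa using key ε hε)
    have := le_antisymm this (abs_nonneg _)
    exact sub_eq_zero.mp (abs_eq_zero.mp this)
  -- strong induction
  intro k
  induction k using Nat.strong_induction_on with
  | _ k ihk =>
    intro hk x hx
    exact step k hk (fun k' hk' => ihk k' hk' (le_trans hk'.le hk)) x hx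
end

section
/- For every positive integer p there exists a constant C_p > 0 such that for all integers n ≥ 1 and all j with (p/2)·log(n+2) ≤ j ≤ n, one has sup_{x ∈ [u_{n,j}, u_{n,j+1}]} |ρ_{n,j}(x)| ≤ C_p/(n+2)^{p+1}. -/
set_option maxHeartbeats 1000000


open Real Set

/-- `β(x) = 2 arsinh(sin(x/2))`. -/
noncomputable def beta (x : ℝ) : ℝ := 2 * Real.arsinh (Real.sin (x / 2))

/-- `f(x) = cos(x/2) / (1 + sin(x/2)^2)`. -/
noncomputable def fsym (x : ℝ) : ℝ := Real.cos (x / 2) / (1 + (Real.sin (x / 2)) ^ 2)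

/-- `η(x) = 2 arctan(1/f(x))` for `x ∈ [0,π)`, extended continuously by `η(π) = π`. -/
noncomputable def eta (x : ℝ) : ℝ :=
  if x < Real.pi then 2 * Real.arctan (1 / fsym x) else Real.pi

/-- Hyperbolic cotangent. -/
noncomputable def coth (x : ℝ) : ℝ := Real.cosh x / Real.sinh x

/-- `η_n^odd(x) = 2 arctan(coth((n+2)β(x)/2)/f(x))` on `(0,π)`, extended continuously
to `[0,π]` (with values `π` at both endpoints). -/
noncomputable def etaOdd (n : ℕ) (x : ℝ) : ℝ :=
  if x ≤ 0 then Real.pi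
  else if x < Real.pi then 2 * Real.arctan (coth (((n : ℝ) + 2) * beta x / 2) / fsym x)
  else Real.pi

/-- `η_n^even(x) = 2 arctan(tanh((n+2)β(x)/2)/f(x))` on `(0,π)`, extended continuously
to `[0,π]` (with value `0` at `0` and `π` at `π`). -/
noncomputable def etaEven (n : ℕ) (x : ℝ) : ℝ :=
  if x ≤ 0 then 0
  else if x < Real.pi then 2 * Real.arctan (Real.tanh (((n : ℝ) + 2) * beta x / 2) / fsym x)
  else Real.pi

/-- `η_{n,j}` is `η_n^odd` for odd `j` and `η_n^even` for even `j`. -/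
noncomputable def etaNJ (n j : ℕ) : ℝ → ℝ := if Odd j then etaOdd n else etaEven n

/-- `ρ_{n,j}(x) = (η_{n,j}(x) − η(x))/(n+2)`. -/
noncomputable def rho (n j : ℕ) (x : ℝ) : ℝ := (etaNJ n j x - eta x) / ((n : ℝ) + 2)


lemma abs_arctan_sub_le (u v : ℝ) : |Real.arctan u - Real.arctan v| ≤ |u - v| := by
  have h := Convex.norm_image_sub_le_of_norm_hasDerivWithin_le
    (f := Real.arctan) (f' := fun x => 1/(1+x^2)) (C := 1) (s := Set.univ)
    (fun x _ => (Real.hasDerivAt_arctan x).hasDerivWithinAt)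
    (fun x _ => by
      rw [Real.norm_eq_abs, abs_of_nonneg (by positivity)]
      rw [div_le_one (by positivity)]; nlinarith [sq_nonneg x])
    convex_univ (Set.mem_univ v) (Set.mem_univ u)
  simpa [Real.norm_eq_abs] using h

lemma sinh_le_of_le_third {t : ℝ} (h0 : 0 ≤ t) (h : t ≤ 1/3) : Real.sinh t ≤ 5/4 * t := by
  have h1 : Real.exp (-t) ≥ 1 - t := by linarith [Real.add_one_le_exp (-t)]
  have hlt : (0:ℝ) < 1 - t := by linarith
  have h2 : Real.exp t ≤ 1/(1-t) := by
    rw [le_div_iff₀ hlt]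
    have h5 : Real.exp t * Real.exp (-t) = 1 := by rw [← Real.exp_add]; simp
    nlinarith [Real.exp_pos t]
  have h3 : Real.sinh t = (Real.exp t - Real.exp (-t))/2 := Real.sinh_eq t
  rw [h3]
  have : Real.exp t - Real.exp (-t) ≤ 1/(1-t) - (1-t) := by linarith
  have h4 : 1/(1-t) - (1-t) ≤ 5/2 * t := by
    rw [div_sub' hlt.ne', div_le_iff₀ hlt]; nlinarith
  linarith

lemma pow_le_factorial_mul_exp {y : ℝ} (hy : 0 ≤ y) (p : ℕ) :
    y ^ p ≤ (p.factorial : ℝ) * Real.exp y := by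
  have h := Real.sum_le_exp_of_nonneg hy (p+1)
  have h2 : y ^ p / (p.factorial : ℝ) ≤ ∑ i ∈ Finset.range (p+1), y ^ i / (i.factorial : ℝ) :=
    Finset.single_le_sum (f := fun i => y ^ i / (i.factorial : ℝ))
      (fun i _ => by positivity) (Finset.self_mem_range_succ p)
  have hp : (0:ℝ) < (p.factorial : ℝ) := by positivity
  rw [div_le_iff₀ hp] at h2
  calc y ^ p ≤ (∑ i ∈ Finset.range (p+1), y ^ i / (i.factorial : ℝ)) * (p.factorial : ℝ) := h2
    _ ≤ Real.exp y * (p.factorial : ℝ) := by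
        apply mul_le_mul_of_nonneg_right _ hp.le
        simpa using h
    _ = (p.factorial : ℝ) * Real.exp y := by ring

lemma sin_half_lb {x : ℝ} (h0 : 0 < x) (h1 : x ≤ 1) : 15/32 * x ≤ Real.sin (x/2) := by
  have h := Real.sin_gt_sub_cube (by linarith : (0:ℝ) < x/2)
  nlinarith [sq_nonneg x, mul_pos h0 h0, mul_nonneg (mul_nonneg h0.le h0.le) h0.le,
    mul_nonneg h0.le (sub_nonneg.2 h1)]

lemma beta_lb_small {x : ℝ} (h0 : 0 < x) (h1 : x ≤ 1) : 2/Real.pi * x ≤ beta x := by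
  have hpi := Real.pi_gt_three
  have hs : Real.sinh (x/Real.pi) ≤ 5/4 * (x/Real.pi) := by
    apply sinh_le_of_le_third (by positivity)
    rw [div_le_iff₀ (by positivity)]; nlinarith
  have h2 : Real.sinh (x/Real.pi) ≤ Real.sin (x/2) := by
    have := sin_half_lb h0 h1
    have h25 : 5/4 * (x/Real.pi) ≤ 15/32 * x := by
      rw [mul_div_assoc', div_le_iff₀ Real.pi_pos]
      nlinarith
    linarith
  have h3 : x/Real.pi ≤ Real.arsinh (Real.sin (x/2)) := by
    rw [← Real.arsinh_sinh (x/Real.pi)]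
    exact Real.arsinh_le_arsinh.2 h2
  unfold beta
  calc 2/Real.pi * x = 2 * (x/Real.pi) := by ring
    _ ≤ 2 * Real.arsinh (Real.sin (x/2)) := by linarith

lemma beta_lb_big {x : ℝ} (h1 : 1 ≤ x) (h2 : x < Real.pi) : 1/2 ≤ beta x := by
  have hpi := Real.pi_gt_three
  have hmono : Real.sin (1/2) ≤ Real.sin (x/2) := by
    apply Real.strictMonoOn_sin.monotoneOn _ _ _
    · constructor <;> [linarith [Real.pi_pos]; linarith]
    · constructor <;> [linarith [Real.pi_pos]; linarith]
    · linarith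
  have hs12 : (15:ℝ)/32 ≤ Real.sin (1/2) := by
    have := sin_half_lb (x := 1) one_pos le_rfl
    simpa using this
  have hsinh : Real.sinh (1/4) ≤ 5/16 := by
    have := sinh_le_of_le_third (t := 1/4) (by norm_num) (by norm_num)
    linarith
  have h3 : (1:ℝ)/4 ≤ Real.arsinh (Real.sin (x/2)) := by
    rw [← Real.arsinh_sinh (1/4)]
    apply Real.arsinh_le_arsinh.2
    linarith
  unfold beta; linarith

lemma tanh_coth_bounds {T : ℝ} (hT : 1 ≤ 2*T) :
    (1/3 ≤ Real.tanh T ∧ |Real.tanh T - 1| ≤ 4 * Real.exp (-(2*T))) ∧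
    (1/3 ≤ coth T ∧ |coth T - 1| ≤ 4 * Real.exp (-(2*T))) := by
  set s := Real.exp (-(2*T)) with hsdef
  have hs0 : 0 < s := Real.exp_pos _
  have hs12 : s ≤ 1/2 := by
    have h1 : Real.exp (-(2*T)) ≤ Real.exp (-1) := Real.exp_le_exp.2 (by linarith)
    have h2 : Real.exp (-1) ≤ 1/2 := by
      rw [Real.exp_neg, inv_le_comm₀ (Real.exp_pos 1) (by norm_num)]
      norm_num
      linarith [Real.exp_one_gt_d9]
    linarith
  have hexp : 0 < Real.exp T := Real.exp_pos T
  have hm : Real.exp (-T) = Real.exp T * s := by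
    rw [hsdef, ← Real.exp_add]; ring_nf
  have hsinh : Real.sinh T = Real.exp T * (1 - s) / 2 := by
    rw [Real.sinh_eq, hm]; ring
  have hcosh : Real.cosh T = Real.exp T * (1 + s) / 2 := by
    rw [Real.cosh_eq, hm]; ring
  have ht : Real.tanh T = (1 - s) / (1 + s) := by
    rw [Real.tanh_eq_sinh_div_cosh, hsinh, hcosh]
    field_simp
  have hc : coth T = (1 + s) / (1 - s) := by
    unfold coth
    rw [hsinh, hcosh]
    have h1s : (0:ℝ) < 1 - s := by linarith
    field_simp
  constructor
  · rw [ht]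
    constructor
    · rw [le_div_iff₀ (by linarith)]; linarith
    · rw [abs_of_nonpos (by rw [sub_nonpos, div_le_one (by linarith)]; linarith)]
      have h4 : 1 - 4*s ≤ (1-s)/(1+s) := by
        rw [le_div_iff₀ (by linarith)]; nlinarith
      linarith
  · rw [hc]
    constructor
    · rw [le_div_iff₀ (by linarith)]; linarith
    · rw [abs_of_nonneg (by rw [sub_nonneg, le_div_iff₀ (by linarith)]; linarith)]
      have h4 : (1+s)/(1-s) ≤ 1 + 4*s := by
        rw [div_le_iff₀ (by linarith)]; nlinarith
      linarith

lemma core_est {a f s : ℝ} (hf0 : 0 < f) (hf1 : f ≤ 1) (ha : 1/3 ≤ a)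
    (hd : |a - 1| ≤ 4*s) (hs : 0 ≤ s) :
    |2 * Real.arctan (a / f) - 2 * Real.arctan (1 / f)| ≤ 24 * s := by
  have ha0 : 0 < a := by linarith
  have h1 : a / f = (f / a)⁻¹ := by
    rw [inv_div]
  rw [h1, one_div, Real.arctan_inv_of_pos (by positivity), Real.arctan_inv_of_pos hf0]
  have hlip := abs_arctan_sub_le f (f / a)
  have hkey : |f - f/a| ≤ 12 * s := by
    have he : f - f/a = f*(a-1)/a := by field_simp
    rw [he, abs_div, abs_mul, abs_of_pos hf0, abs_of_pos ha0]
    have h2 : f * |a-1| ≤ 4*s := by nlinarith [abs_nonneg (a-1)]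
    calc f*|a-1|/a ≤ (4*s)/(1/3) := by
          apply div_le_div₀ (by positivity) h2 (by norm_num) ha
      _ = 12*s := by ring
  calc |2*(Real.pi/2 - Real.arctan (f/a)) - 2*(Real.pi/2 - Real.arctan f)|
      = 2*|Real.arctan f - Real.arctan (f/a)| := by
        rw [show (2:ℝ)*(Real.pi/2 - Real.arctan (f/a)) - 2*(Real.pi/2 - Real.arctan f)
            = 2*(Real.arctan f - Real.arctan (f/a)) by ring, abs_mul]
        norm_num
    _ ≤ 2*|f - f/a| := by linarith
    _ ≤ 24*s := by linarith

theorem stmt9 (p : ℕ) (hp : 1 ≤ p) :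
    ∃ C : ℝ, 0 < C ∧ ∀ n : ℕ, 1 ≤ n → ∀ j : ℕ,
      (p : ℝ) / 2 * Real.log ((n : ℝ) + 2) ≤ (j : ℝ) → j ≤ n →
      ∀ x ∈ Set.Icc ((j : ℝ) * Real.pi / ((n : ℝ) + 2))
          (((j : ℝ) + 1) * Real.pi / ((n : ℝ) + 2)),
        |rho n j x| ≤ C / ((n : ℝ) + 2) ^ (p + 1) := by
  refine ⟨24 * (p.factorial : ℝ) * 2^p, by positivity, ?_⟩
  intro n hn j hj1 hj2 x hx
  obtain ⟨hxl, hxr⟩ := hx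
  have hN3 : (3:ℝ) ≤ (n:ℝ) + 2 := by
    have : (1:ℝ) ≤ (n:ℝ) := by exact_mod_cast hn
    linarith
  have hN0 : (0:ℝ) < (n:ℝ) + 2 := by linarith
  have hpi := Real.pi_gt_three
  have hpi0 := Real.pi_pos
  have hlogN : 1 ≤ Real.log ((n:ℝ)+2) := by
    rw [Real.le_log_iff_exp_le hN0]
    linarith [Real.exp_one_lt_d9]
  have hp1 : (1:ℝ) ≤ (p:ℝ) := by exact_mod_cast hp
  have hj0 : (1:ℝ) ≤ (j:ℝ) := by
    have hpos : (0:ℝ) < (p:ℝ)/2*Real.log ((n:ℝ)+2) := by nlinarith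
    have h0j : (0:ℝ) < (j:ℝ) := lt_of_lt_of_le hpos hj1
    have : 0 < j := by exact_mod_cast h0j
    exact_mod_cast this
  have hjn : (j:ℝ) ≤ (n:ℝ) := by exact_mod_cast hj2
  have hx0 : 0 < x := by
    refine lt_of_lt_of_le ?_ hxl
    apply div_pos _ hN0
    nlinarith
  have hxpi : x < Real.pi := by
    have h1 : ((j:ℝ)+1) * Real.pi / ((n:ℝ)+2) < Real.pi := by
      rw [div_lt_iff₀ hN0]
      nlinarith
    linarith
  have hcos : 0 < Real.cos (x/2) :=
    Real.cos_pos_of_mem_Ioo ⟨by linarith, by linarith⟩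
  have hf0 : 0 < fsym x := div_pos hcos (by positivity)
  have hf1 : fsym x ≤ 1 := by
    unfold fsym
    rw [div_le_one (by positivity)]
    nlinarith [Real.cos_le_one (x/2), sq_nonneg (Real.sin (x/2))]
  have hkey : 1 ≤ ((n:ℝ)+2) * beta x ∧
      Real.exp (-(((n:ℝ)+2)*beta x)) * ((n:ℝ)+2)^p ≤ (p.factorial:ℝ)*2^p := by
    have hfac1 : (1:ℝ) ≤ (p.factorial:ℝ)*2^p := by
      have : (1:ℝ) ≤ (p.factorial:ℝ) := by exact_mod_cast p.factorial_pos
      have h2p : (1:ℝ) ≤ 2^p := one_le_pow₀ (by norm_num)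
      nlinarith
    rcases le_or_gt x 1 with hxle | hxgt
    · have hb := beta_lb_small hx0 hxle
      have h2j : 2*(j:ℝ) ≤ ((n:ℝ)+2) * beta x := by
        have hbx : 2/Real.pi*((j:ℝ)*Real.pi/((n:ℝ)+2)) ≤ beta x := by
          refine le_trans ?_ hb
          gcongr
        have heq : 2/Real.pi*((j:ℝ)*Real.pi/((n:ℝ)+2)) = 2*(j:ℝ)/((n:ℝ)+2) := by
          field_simp
        rw [heq, div_le_iff₀ hN0] at hbx
        nlinarith
      have hplog : (p:ℝ)*Real.log ((n:ℝ)+2) ≤ ((n:ℝ)+2)*beta x := by linarith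
      constructor
      · nlinarith
      · have h1 : Real.exp (-(((n:ℝ)+2)*beta x)) ≤ Real.exp (-((p:ℝ)*Real.log ((n:ℝ)+2))) :=
          Real.exp_le_exp.2 (by linarith)
        have h2 : Real.exp (-((p:ℝ)*Real.log ((n:ℝ)+2))) = (((n:ℝ)+2)^p)⁻¹ := by
          rw [Real.exp_neg]
          congr 1
          rw [← Real.log_pow, Real.exp_log (by positivity)]
        have h3 : Real.exp (-(((n:ℝ)+2)*beta x)) * ((n:ℝ)+2)^p ≤ 1 := by
          calc Real.exp (-(((n:ℝ)+2)*beta x)) * ((n:ℝ)+2)^p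
              ≤ (((n:ℝ)+2)^p)⁻¹ * ((n:ℝ)+2)^p := by
                apply mul_le_mul_of_nonneg_right _ (by positivity)
                rw [← h2]; exact h1
            _ = 1 := inv_mul_cancel₀ (by positivity)
        linarith
    · have hb := beta_lb_big hxgt.le hxpi
      constructor
      · nlinarith
      · have h1 : Real.exp (-(((n:ℝ)+2)*beta x)) ≤ Real.exp (-(((n:ℝ)+2)/2)) :=
          Real.exp_le_exp.2 (by nlinarith)
        have h2 := pow_le_factorial_mul_exp (y := ((n:ℝ)+2)/2) (by positivity) p
        have h4 : ((n:ℝ)+2)^p = 2^p * (((n:ℝ)+2)/2)^p := by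
          rw [← mul_pow]; ring_nf
        have h5 : Real.exp (-(((n:ℝ)+2)/2)) * Real.exp (((n:ℝ)+2)/2) = 1 := by
          rw [← Real.exp_add]; simp
        calc Real.exp (-(((n:ℝ)+2)*beta x)) * ((n:ℝ)+2)^p
            ≤ Real.exp (-(((n:ℝ)+2)/2)) * ((n:ℝ)+2)^p := by
              apply mul_le_mul_of_nonneg_right h1 (by positivity)
          _ = 2^p * (Real.exp (-(((n:ℝ)+2)/2)) * (((n:ℝ)+2)/2)^p) := by rw [h4]; ring
          _ ≤ 2^p * (Real.exp (-(((n:ℝ)+2)/2)) * ((p.factorial:ℝ) * Real.exp (((n:ℝ)+2)/2))) := by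
              gcongr
          _ = (p.factorial:ℝ)*2^p * (Real.exp (-(((n:ℝ)+2)/2)) * Real.exp (((n:ℝ)+2)/2)) := by
              ring
          _ = (p.factorial:ℝ)*2^p := by rw [h5, mul_one]
  have h2T : 2*(((n:ℝ)+2)*beta x/2) = ((n:ℝ)+2)*beta x := by ring
  obtain ⟨⟨hta, htb⟩, ⟨hca, hcb⟩⟩ :=
    tanh_coth_bounds (T := ((n:ℝ)+2)*beta x/2) (by rw [h2T]; exact hkey.1)
  rw [h2T] at htb hcb
  have hdiff : |etaNJ n j x - eta x| ≤ 24 * Real.exp (-(((n:ℝ)+2)*beta x)) := by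
    have heta : eta x = 2*Real.arctan (1/fsym x) := if_pos hxpi
    unfold etaNJ
    by_cases hj : Odd j
    · rw [if_pos hj]
      unfold etaOdd
      rw [if_neg (not_le.2 hx0), if_pos hxpi, heta]
      exact core_est hf0 hf1 hca hcb (Real.exp_pos _).le
    · rw [if_neg hj]
      unfold etaEven
      rw [if_neg (not_le.2 hx0), if_pos hxpi, heta]
      exact core_est hf0 hf1 hta htb (Real.exp_pos _).le
  unfold rho
  rw [abs_div, abs_of_pos hN0, div_le_div_iff₀ hN0 (by positivity)]
  have hps : (0:ℝ) < ((n:ℝ)+2)^p := by positivity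
  have hexp0 : (0:ℝ) < Real.exp (-(((n:ℝ)+2)*beta x)) := Real.exp_pos _
  have hP : ((n:ℝ)+2)^(p+1) = ((n:ℝ)+2)^p * ((n:ℝ)+2) := pow_succ _ _
  rw [hP]
  calc |etaNJ n j x - eta x| * (((n:ℝ)+2)^p * ((n:ℝ)+2))
      ≤ (24 * Real.exp (-(((n:ℝ)+2)*beta x))) * (((n:ℝ)+2)^p * ((n:ℝ)+2)) := by
        apply mul_le_mul_of_nonneg_right hdiff (by positivity)
    _ = 24 * (Real.exp (-(((n:ℝ)+2)*beta x)) * ((n:ℝ)+2)^p) * ((n:ℝ)+2) := by ring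
    _ ≤ 24 * ((p.factorial:ℝ)*2^p) * ((n:ℝ)+2) := by
        apply mul_le_mul_of_nonneg_right _ hN0.le
        apply mul_le_mul_of_nonneg_left hkey.2 (by norm_num)
    _ = 24 * (p.factorial:ℝ) * 2^p * ((n:ℝ)+2) := by ring
end

section
/- For each integer j ≥ 1 there exists exactly one real number α_j in the open interval (jπ, (j+1)π) satisfying tanh(α_j/2) = (−1)^j tan(α_j/2). Moreover, α_j > (2j+1)π/2 when j is odd, and α_j < (2j+1)π/2 when j is even. -/
open Real Set

private lemma tanh_lt_one' (x : ℝ) : Real.tanh x < 1 := by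
  rw [Real.tanh_eq_sinh_div_cosh, div_lt_one (Real.cosh_pos x)]
  exact Real.sinh_lt_cosh x

private lemma tanh_pos' {x : ℝ} (hx : 0 < x) : 0 < Real.tanh x := by
  rw [Real.tanh_eq_sinh_div_cosh]
  exact div_pos (by rwa [Real.sinh_pos_iff]) (Real.cosh_pos x)

private lemma hasDerivAt_tanh' (x : ℝ) : HasDerivAt Real.tanh (1 / Real.cosh x ^ 2) x := by
  have h : HasDerivAt (fun y => Real.sinh y / Real.cosh y)
      ((Real.cosh x * Real.cosh x - Real.sinh x * Real.sinh x) / Real.cosh x ^ 2) x :=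
    (Real.hasDerivAt_sinh x).div (Real.hasDerivAt_cosh x) (Real.cosh_pos x).ne'
  have h2 : Real.cosh x * Real.cosh x - Real.sinh x * Real.sinh x = 1 := by
    have := Real.cosh_sq_sub_sinh_sq x; nlinarith [this]
  have h3 : Real.tanh = fun y => Real.sinh y / Real.cosh y :=
    funext fun y => Real.tanh_eq_sinh_div_cosh y
  rw [h3]
  simpa [h2] using h

private lemma cos_ne_A (k : ℕ) {x : ℝ} (h1 : (k : ℝ) * π ≤ x) (h2 : x < (k : ℝ) * π + π / 2) :
    Real.cos x ≠ 0 := by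
  rw [Real.cos_ne_zero_iff]
  intro l hl
  have hπ := Real.pi_pos
  subst hl
  have h1' : 2 * (k : ℝ) ≤ 2 * (l : ℝ) + 1 := by nlinarith
  have h2' : 2 * (l : ℝ) + 1 < 2 * (k : ℝ) + 1 := by nlinarith
  have hA : 2 * (k : ℤ) ≤ 2 * l + 1 := by exact_mod_cast h1'
  have hB : 2 * l + 1 < 2 * (k : ℤ) + 1 := by exact_mod_cast h2'
  omega

private lemma cos_ne_B (k : ℕ) {x : ℝ} (h1 : (2 * (k : ℝ) + 1) * π / 2 < x)
    (h2 : x ≤ ((k : ℝ) + 1) * π) : Real.cos x ≠ 0 := by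
  rw [Real.cos_ne_zero_iff]
  intro l hl
  have hπ := Real.pi_pos
  subst hl
  have h1' : 2 * (k : ℝ) + 1 < 2 * (l : ℝ) + 1 := by nlinarith
  have h2' : 2 * (l : ℝ) + 1 ≤ 2 * (k : ℝ) + 2 := by nlinarith
  have hA : 2 * (k : ℤ) + 1 < 2 * l + 1 := by exact_mod_cast h1'
  have hB : 2 * l + 1 ≤ 2 * (k : ℤ) + 2 := by exact_mod_cast h2'
  omega

theorem stmt11 (j : ℕ) (hj : 1 ≤ j) :
    ∃ α : ℝ,
      (α ∈ Set.Ioo ((j : ℝ) * Real.pi) (((j : ℝ) + 1) * Real.pi) ∧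
        Real.tanh (α / 2) = (-1 : ℝ) ^ j * Real.tan (α / 2)) ∧
      (∀ α' : ℝ, α' ∈ Set.Ioo ((j : ℝ) * Real.pi) (((j : ℝ) + 1) * Real.pi) →
        Real.tanh (α' / 2) = (-1 : ℝ) ^ j * Real.tan (α' / 2) → α' = α) ∧
      (Odd j → (2 * (j : ℝ) + 1) * Real.pi / 2 < α) ∧
      (Even j → α < (2 * (j : ℝ) + 1) * Real.pi / 2) := by
  have hπ := Real.pi_pos
  have hj1 : (1 : ℝ) ≤ (j : ℝ) := by exact_mod_cast hj
  have hhalf : ∀ x : ℝ, HasDerivAt (fun y : ℝ => y / 2) ((2 : ℝ)⁻¹) x := fun x => by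
    simpa using (hasDerivAt_id x).div_const 2
  rcases Nat.even_or_odd j with he | ho
  · -- Even case
    obtain ⟨k, hk⟩ := he
    have hk1 : 1 ≤ k := by omega
    have hjk : (j : ℝ) = 2 * (k : ℝ) := by rw [hk]; push_cast; ring
    set F : ℝ → ℝ := fun α => Real.tanh (α / 2) - Real.tan (α / 2) with hF
    have hcos : ∀ x ∈ Ico ((j : ℝ) * π) (((j : ℝ) + 1) * π), Real.cos (x / 2) ≠ 0 := by
      intro x hx
      refine cos_ne_A k ?_ ?_
      · have := hx.1; rw [hjk] at this; linarith
      · have := hx.2; rw [hjk] at this; linarith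
    have hder : ∀ x ∈ Ico ((j : ℝ) * π) (((j : ℝ) + 1) * π),
        HasDerivAt F (1 / Real.cosh (x / 2) ^ 2 * (2 : ℝ)⁻¹
          - 1 / Real.cos (x / 2) ^ 2 * (2 : ℝ)⁻¹) x := by
      intro x hx
      exact ((hasDerivAt_tanh' (x / 2)).comp x (hhalf x)).sub
        ((Real.hasDerivAt_tan (hcos x hx)).comp x (hhalf x))
    have hcont : ContinuousOn F (Ico ((j : ℝ) * π) (((j : ℝ) + 1) * π)) :=
      fun x hx => (hder x hx).continuousAt.continuousWithinAt
    have hanti : StrictAntiOn F (Ico ((j : ℝ) * π) (((j : ℝ) + 1) * π)) := by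
      refine strictAntiOn_of_deriv_neg (convex_Ico _ _) hcont ?_
      intro x hx
      rw [interior_Ico] at hx
      rw [(hder x (Ioo_subset_Ico_self hx)).deriv]
      have hx0 : 0 < x / 2 := by nlinarith [hx.1]
      have h1 : 1 / Real.cosh (x / 2) ^ 2 < 1 := by
        have hc1 : 1 < Real.cosh (x / 2) := Real.one_lt_cosh.mpr (ne_of_gt hx0)
        rw [div_lt_one (by nlinarith)]
        nlinarith
      have h2 : 1 ≤ 1 / Real.cos (x / 2) ^ 2 := by
        have hcne := hcos x (Ioo_subset_Ico_self hx)
        have hle : Real.cos (x / 2) ^ 2 ≤ 1 := by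
          nlinarith [Real.neg_one_le_cos (x / 2), Real.cos_le_one (x / 2)]
        have hpos : 0 < Real.cos (x / 2) ^ 2 :=
          lt_of_lt_of_eq (pow_pos (abs_pos.mpr hcne) 2) (sq_abs _)
        rw [le_div_iff₀ hpos]; linarith
      nlinarith
    have hjhalf : (j : ℝ) * π / 2 = (k : ℝ) * π := by rw [hjk]; ring
    have hFa : 0 < F ((j : ℝ) * π) := by
      have ht : Real.tan ((j : ℝ) * π / 2) = 0 := by
        rw [hjhalf, Real.tan_eq_zero_iff]; exact ⟨2 * k, by push_cast; ring⟩
      have htanh : 0 < Real.tanh ((j : ℝ) * π / 2) := by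
        refine tanh_pos' ?_
        rw [hjhalf]
        have : (1 : ℝ) ≤ (k : ℝ) := by exact_mod_cast hk1
        nlinarith
      simp only [hF]; rw [ht]; linarith
    have hchalf : (2 * (j : ℝ) + 1) * π / 2 / 2 = (k : ℝ) * π + π / 4 := by rw [hjk]; ring
    have hFc : F ((2 * (j : ℝ) + 1) * π / 2) < 0 := by
      have ht : Real.tan ((2 * (j : ℝ) + 1) * π / 2 / 2) = 1 := by
        rw [hchalf]
        have hper := Real.tan_periodic.nat_mul k (π / 4)
        rw [add_comm] at hper
        rw [hper, Real.tan_pi_div_four]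
      have := tanh_lt_one' ((2 * (j : ℝ) + 1) * π / 2 / 2)
      simp only [hF]; rw [ht]; linarith
    have hac : (j : ℝ) * π ≤ (2 * (j : ℝ) + 1) * π / 2 := by nlinarith
    have hcb : (2 * (j : ℝ) + 1) * π / 2 < ((j : ℝ) + 1) * π := by nlinarith
    have hsub : Icc ((j : ℝ) * π) ((2 * (j : ℝ) + 1) * π / 2)
        ⊆ Ico ((j : ℝ) * π) (((j : ℝ) + 1) * π) := Icc_subset_Ico_right hcb
    obtain ⟨α, hα, hFα⟩ := intermediate_value_Ioo' hac (hcont.mono hsub) ⟨hFc, hFa⟩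
    have hαb : α ∈ Ioo ((j : ℝ) * π) (((j : ℝ) + 1) * π) := ⟨hα.1, hα.2.trans hcb⟩
    have hneg : ((-1 : ℝ)) ^ j = 1 := Even.neg_one_pow ⟨k, hk⟩
    have hFα' : Real.tanh (α / 2) - Real.tan (α / 2) = 0 := hFα
    refine ⟨α, ⟨hαb, ?_⟩, ?_, ?_, ?_⟩
    · rw [hneg, one_mul]; linarith
    · intro α' hα' heq'
      have h1 : F α' = 0 := by simp only [hF]; rw [heq', hneg]; ring
      exact hanti.injOn (Ioo_subset_Ico_self hα') (Ioo_subset_Ico_self hαb)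
        (h1.trans hFα.symm)
    · intro hodd; exact absurd (⟨k, hk⟩ : Even j) (Nat.not_even_iff_odd.mpr hodd)
    · intro _; exact hα.2
  · -- Odd case
    obtain ⟨k, hk⟩ := ho
    have hjk : (j : ℝ) = 2 * (k : ℝ) + 1 := by rw [hk]; push_cast; ring
    set F : ℝ → ℝ := fun α => Real.tanh (α / 2) + Real.tan (α / 2) with hF
    have hcos : ∀ x ∈ Ioc ((j : ℝ) * π) (((j : ℝ) + 1) * π), Real.cos (x / 2) ≠ 0 := by
      intro x hx
      refine cos_ne_B k ?_ ?_
      · have := hx.1; rw [hjk] at this; linarith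
      · have := hx.2; rw [hjk] at this; linarith
    have hder : ∀ x ∈ Ioc ((j : ℝ) * π) (((j : ℝ) + 1) * π),
        HasDerivAt F (1 / Real.cosh (x / 2) ^ 2 * (2 : ℝ)⁻¹
          + 1 / Real.cos (x / 2) ^ 2 * (2 : ℝ)⁻¹) x := by
      intro x hx
      exact ((hasDerivAt_tanh' (x / 2)).comp x (hhalf x)).add
        ((Real.hasDerivAt_tan (hcos x hx)).comp x (hhalf x))
    have hcont : ContinuousOn F (Ioc ((j : ℝ) * π) (((j : ℝ) + 1) * π)) :=
      fun x hx => (hder x hx).continuousAt.continuousWithinAt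
    have hmono : StrictMonoOn F (Ioc ((j : ℝ) * π) (((j : ℝ) + 1) * π)) := by
      refine strictMonoOn_of_deriv_pos (convex_Ioc _ _) hcont ?_
      intro x hx
      rw [interior_Ioc] at hx
      rw [(hder x (Ioo_subset_Ioc_self hx)).deriv]
      have hcne := hcos x (Ioo_subset_Ioc_self hx)
      have hpos1 : 0 < 1 / Real.cosh (x / 2) ^ 2 := by
        have := Real.cosh_pos (x / 2); positivity
      have hpos2 : 0 < 1 / Real.cos (x / 2) ^ 2 := by
        have hpos : 0 < Real.cos (x / 2) ^ 2 :=
          lt_of_lt_of_eq (pow_pos (abs_pos.mpr hcne) 2) (sq_abs _)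
        positivity
      nlinarith
    have hchalf : (2 * (j : ℝ) + 1) * π / 2 / 2 = -(π / 4) + ((k : ℝ) + 1) * π := by
      rw [hjk]; ring
    have hFc : F ((2 * (j : ℝ) + 1) * π / 2) < 0 := by
      have ht : Real.tan ((2 * (j : ℝ) + 1) * π / 2 / 2) = -1 := by
        rw [hchalf]
        have hper := Real.tan_periodic.nat_mul (k + 1) (-(π / 4))
        have hcast : ((k : ℝ) + 1) * π = (↑(k + 1) : ℝ) * π := by push_cast; ring
        rw [hcast, hper, Real.tan_neg, Real.tan_pi_div_four]
      have := tanh_lt_one' ((2 * (j : ℝ) + 1) * π / 2 / 2)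
      simp only [hF]; rw [ht]; linarith
    have hbhalf : ((j : ℝ) + 1) * π / 2 = ((k : ℝ) + 1) * π := by rw [hjk]; ring
    have hFb : 0 < F (((j : ℝ) + 1) * π) := by
      have ht : Real.tan (((j : ℝ) + 1) * π / 2) = 0 := by
        rw [hbhalf, Real.tan_eq_zero_iff]
        exact ⟨2 * ((k : ℤ) + 1), by push_cast; ring⟩
      have htanh : 0 < Real.tanh (((j : ℝ) + 1) * π / 2) := by
        refine tanh_pos' ?_
        rw [hbhalf]
        have : (0 : ℝ) ≤ (k : ℝ) := Nat.cast_nonneg k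
        nlinarith
      simp only [hF]; rw [ht]; linarith
    have hac : (j : ℝ) * π < (2 * (j : ℝ) + 1) * π / 2 := by nlinarith
    have hcb : (2 * (j : ℝ) + 1) * π / 2 ≤ ((j : ℝ) + 1) * π := by nlinarith
    have hsub : Icc ((2 * (j : ℝ) + 1) * π / 2) (((j : ℝ) + 1) * π)
        ⊆ Ioc ((j : ℝ) * π) (((j : ℝ) + 1) * π) :=
      fun x hx => ⟨lt_of_lt_of_le hac hx.1, hx.2⟩
    obtain ⟨α, hα, hFα⟩ := intermediate_value_Ioo hcb (hcont.mono hsub) ⟨hFc, hFb⟩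
    have hαb : α ∈ Ioo ((j : ℝ) * π) (((j : ℝ) + 1) * π) := ⟨hac.trans hα.1, hα.2⟩
    have hneg : ((-1 : ℝ)) ^ j = -1 := Odd.neg_one_pow ⟨k, hk⟩
    have hFα' : Real.tanh (α / 2) + Real.tan (α / 2) = 0 := hFα
    have hIooIoc : Ioo ((j : ℝ) * π) (((j : ℝ) + 1) * π)
        ⊆ Ioc ((j : ℝ) * π) (((j : ℝ) + 1) * π) := Ioo_subset_Ioc_self
    refine ⟨α, ⟨hαb, ?_⟩, ?_, ?_, ?_⟩
    · rw [hneg]; linarith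
    · intro α' hα' heq'
      have h1 : F α' = 0 := by simp only [hF]; rw [heq', hneg]; ring
      exact hmono.injOn (hIooIoc hα') (hIooIoc hαb) (h1.trans hFα.symm)
    · intro _; exact hα.1
    · intro hev; exact absurd (⟨k, hk⟩ : Odd j) (Nat.not_odd_iff_even.mpr hev)
end
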